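/- arXiv:2505.01289 — 2 statements merged into one kernel-verified Lean document; each statement's English description precedes it below -/
import Mathlib

section
/- Let L ∈ Σ[∂] be monic of order n in normal form with constants C of characteristic zero. For every m ∈ ℕ there is an isomorphism of C-vector spaces V_m ≅ Z_m(L) / C_m[L], where V_m is the space of constant solutions of the homogeneous system hGD_{n,m}(L), Z_m(L) is the space of elements of Z(L) of order ≤ m, and C_m[L] is the space of polynomials in L of order ≤ m. -/
open scoped Classical
noncomputable section

variable {R : Type} [Ring R]

/-- Left multiplication by `a` as an additive endomorphism of `R`. -/
def mulOp (a : R) : AddMonoid.End R := AddMonoidHom.mulLeft a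

/-- The derivation as an additive endomorphism. -/
def derOp (d : R →+ R) : AddMonoid.End R := d

/-- `d` satisfies the Leibniz rule. -/
def IsDeriv (d : R →+ R) : Prop := ∀ a b : R, d (a * b) = d a * b + a * d b

/-- Additive group of differential operators of order at most `n`:
sums of terms `a · ∂^i` with `i ≤ n`. -/
def OpLE (d : R →+ R) (n : ℕ) : AddSubgroup (AddMonoid.End R) :=
  AddSubgroup.closure {P | ∃ (a : R) (i : ℕ), i ≤ n ∧ P = mulOp a * derOp d ^ i}

/-- `L` is a differential operator. -/
def IsOp (d : R →+ R) (L : AddMonoid.End R) : Prop := ∃ n, L ∈ OpLE d n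

/-- `L` is a differential operator of exact order `n`. -/
def HasOrd (d : R →+ R) (L : AddMonoid.End R) (n : ℕ) : Prop :=
  L ∈ OpLE d n ∧ ∀ k, L ∈ OpLE d k → n ≤ k

/-- `L` is a monic differential operator of order `n`. -/
def MonicOrd (d : R →+ R) (L : AddMonoid.End R) (n : ℕ) : Prop :=
  HasOrd d L n ∧ L - derOp d ^ n ∈ OpLE d (n - 1)

/-- The centralizer of `L` in the ring of differential operators. -/
def Cent (d : R →+ R) (L : AddMonoid.End R) : Set (AddMonoid.End R) :=
  {A | IsOp d A ∧ L * A = A * L}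

/-- Polynomials in `L` with constant coefficients. -/
def CPoly (d : R →+ R) (L : AddMonoid.End R) : Set (AddMonoid.End R) :=
  {P | ∃ p : Polynomial R, (∀ k, d (p.coeff k) = 0) ∧
      P = ∑ i ∈ Finset.range (p.natDegree + 1), mulOp (p.coeff i) * L ^ i}

/-- The level of `L`: smallest order of an element of `Z(L) \ C[L]`. -/
def Level (d : R →+ R) (L : AddMonoid.End R) (M : ℕ) : Prop :=
  (∃ Q ∈ Cent d L, Q ∉ CPoly d L ∧ HasOrd d Q M) ∧
  ∀ Q ∈ Cent d L, Q ∉ CPoly d L → ∀ q, HasOrd d Q q → M ≤ q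

/-- The index set `J_{n,m} = {1, ..., m} \\ nℤ`. -/
def Jset (n m : ℕ) : Finset ℕ := (Finset.range (m + 1)).filter (fun j => ¬ (n ∣ j))

/-- The operator `∑_{j ∈ J} c_j · B_j` associated to a coefficient vector `c`. -/
def theta {R : Type} [Ring R] (c : ℕ → R) (B : ℕ → AddMonoid.End R) (J : Finset ℕ) :
    AddMonoid.End R :=
  ∑ j ∈ J, mulOp (c j) * B j

/-- `V_m`: the constant solutions of the homogeneous system `hGD_{n,m}(L)`, i.e. the
constant coefficient vectors `c` supported on `J_{n,m}` such that
`∑_{j ∈ J_{n,m}} c_j B_j` commutes with `L`. -/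
def VmSet {R : Type} [Ring R] (d : R →+ R) (L : AddMonoid.End R)
    (B : ℕ → AddMonoid.End R) (n m : ℕ) : Set (ℕ → R) :=
  {c | (∀ j, d (c j) = 0) ∧ (∀ j ∉ Jset n m, c j = 0) ∧
       theta c B (Jset n m) ∈ Cent d L}

/-- `F_m`: the constant solutions of the inhomogeneous system `GD_{n,m}(L)`, i.e. the
constant coefficient vectors `c` supported on `J_{n,m−1}` such that
`B_m + ∑_{j ∈ J_{n,m−1}} c_j B_j` commutes with `L`. -/
def FmSet {R : Type} [Ring R] (d : R →+ R) (L : AddMonoid.End R)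
    (B : ℕ → AddMonoid.End R) (n m : ℕ) : Set (ℕ → R) :=
  {c | (∀ j, d (c j) = 0) ∧ (∀ j ∉ Jset n (m - 1), c j = 0) ∧
       B m + theta c B (Jset n (m - 1)) ∈ Cent d L}

set_option linter.unusedSectionVars false
set_option maxHeartbeats 1000000

namespace VmAux
variable {F : Type} [Field F] (d : F →+ F)

@[simp] lemma mulOp_apply (a x : F) : mulOp a x = a * x := rfl
@[simp] lemma derOp_apply (x : F) : derOp d x = d x := rfl
@[simp] lemma end_mul_apply (f g : AddMonoid.End F) (x : F) : (f * g) x = f (g x) := rfl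
@[simp] lemma end_one_apply (x : F) : (1 : AddMonoid.End F) x = x := rfl

lemma endExt {f g : AddMonoid.End F} (h : ∀ x, f x = g x) : f = g := AddMonoidHom.ext h


@[simp] lemma end_add_apply (f g : AddMonoid.End F) (x : F) : (f + g) x = f x + g x := rfl
@[simp] lemma end_neg_apply (f : AddMonoid.End F) (x : F) : (-f) x = -(f x) := rfl
@[simp] lemma end_sub_apply (f g : AddMonoid.End F) (x : F) : (f - g) x = f x - g x := rfl

lemma end_mul_neg (f g : AddMonoid.End F) : f * -g = -(f * g) := by
  apply endExt; intro x; simp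
lemma end_neg_mul (f g : AddMonoid.End F) : (-f) * g = -(f * g) := by
  apply endExt; intro x; simp

lemma mulOp_add (a b : F) : mulOp (a + b) = mulOp a + mulOp b := by
  apply endExt; intro x; simp [add_mul]
@[simp] lemma mulOp_zero : mulOp (0 : F) = 0 := by apply endExt; intro x; simp
lemma mulOp_neg (a : F) : mulOp (-a) = - mulOp a := by apply endExt; intro x; simp [neg_mul]
lemma mulOp_sub (a b : F) : mulOp (a - b) = mulOp a - mulOp b := by
  apply endExt; intro x; simp [sub_mul]
lemma mulOp_mul (a b : F) : mulOp (a * b) = mulOp a * mulOp b := by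
  apply endExt; intro x; simp [mul_assoc]
@[simp] lemma mulOp_one : mulOp (1 : F) = 1 := by apply endExt; intro x; simp
lemma mulOp_comm (a b : F) : mulOp a * mulOp b = mulOp b * mulOp a := by
  rw [← mulOp_mul, ← mulOp_mul, mul_comm]
lemma mulOp_inj {a b : F} (h : mulOp a = mulOp b) : a = b := by
  have := congrArg (fun f : AddMonoid.End F => f 1) h
  simpa using this

lemma gen_mem {n : ℕ} (a : F) {i : ℕ} (hi : i ≤ n) : mulOp a * derOp d ^ i ∈ OpLE d n :=
  AddSubgroup.subset_closure ⟨a, i, hi, rfl⟩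
lemma mulOp_mem (a : F) (n : ℕ) : mulOp a ∈ OpLE d n := by
  simpa using gen_mem d a (Nat.zero_le n)
lemma OpLE_mono {m n : ℕ} (h : m ≤ n) : OpLE d m ≤ OpLE d n := by
  apply AddSubgroup.closure_mono
  rintro P ⟨a, i, hi, rfl⟩; exact ⟨a, i, hi.trans h, rfl⟩
lemma derOp_pow_mem {i n : ℕ} (hi : i ≤ n) : derOp d ^ i ∈ OpLE d n := by
  simpa using gen_mem d (1:F) hi

lemma opLE_induction {n : ℕ} {P : AddMonoid.End F → Prop}
    (hgen : ∀ (a : F) (i : ℕ), i ≤ n → P (mulOp a * derOp d ^ i))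
    (h0 : P 0) (hadd : ∀ x y, P x → P y → P (x + y)) (hneg : ∀ x, P x → P (-x)) :
    ∀ A ∈ OpLE d n, P A := by
  intro A hA
  refine AddSubgroup.closure_induction ?_ h0 (fun x y _ _ hx hy => hadd x y hx hy)
    (fun x _ hx => hneg x hx) hA
  rintro x ⟨a, i, hi, rfl⟩; exact hgen a i hi

lemma der_mulOp (hd : IsDeriv d) (b : F) :
    derOp d * mulOp b = mulOp (d b) + mulOp b * derOp d := by
  apply endExt; intro x; simp [hd b x]

lemma mul_opLE {n : ℕ} (c : F) {A : AddMonoid.End F} (hA : A ∈ OpLE d n) :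
    mulOp c * A ∈ OpLE d n := by
  refine opLE_induction (P := fun A => mulOp c * A ∈ OpLE d n) d ?_ ?_ ?_ ?_ A hA
  · intro a i hi; rw [← mul_assoc, ← mulOp_mul]; exact gen_mem d _ hi
  · simpa using (OpLE d n).zero_mem
  · intro x y hx hy; rw [mul_add]; exact add_mem hx hy
  · intro x hx; rw [end_mul_neg]; exact neg_mem hx

lemma der_opLE (hd : IsDeriv d) {n : ℕ} {A : AddMonoid.End F} (hA : A ∈ OpLE d n) :
    derOp d * A ∈ OpLE d (n + 1) := by
  refine opLE_induction (P := fun A => derOp d * A ∈ OpLE d (n+1)) d ?_ ?_ ?_ ?_ A hA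
  · intro a i hi
    rw [← mul_assoc, der_mulOp d hd, add_mul, mul_assoc, ← pow_succ']
    exact add_mem (gen_mem d _ (hi.trans (Nat.le_succ n))) (gen_mem d _ (by omega))
  · simpa using (OpLE d (n+1)).zero_mem
  · intro x y hx hy; rw [mul_add]; exact add_mem hx hy
  · intro x hx; rw [end_mul_neg]; exact neg_mem hx

lemma pow_der_opLE (hd : IsDeriv d) {n : ℕ} {A : AddMonoid.End F} (hA : A ∈ OpLE d n)
    (i : ℕ) : derOp d ^ i * A ∈ OpLE d (i + n) := by
  induction i with
  | zero => simpa using hA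
  | succ i ih =>
      have := der_opLE d hd ih
      rw [pow_succ', mul_assoc]
      exact (OpLE_mono d (by omega)) this

lemma opLE_mul_pow {n : ℕ} {A : AddMonoid.End F} (hA : A ∈ OpLE d n) (j : ℕ) :
    A * derOp d ^ j ∈ OpLE d (n + j) := by
  refine opLE_induction (P := fun A => A * derOp d ^ j ∈ OpLE d (n + j)) d ?_ ?_ ?_ ?_ A hA
  · intro a i hi; rw [mul_assoc, ← pow_add]; exact gen_mem d _ (by omega)
  · simpa using (OpLE d (n+j)).zero_mem
  · intro x y hx hy; rw [add_mul]; exact add_mem hx hy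
  · intro x hx; rw [end_neg_mul]; exact neg_mem hx

lemma opLE_mul (hd : IsDeriv d) {m n : ℕ} {A B : AddMonoid.End F}
    (hA : A ∈ OpLE d m) (hB : B ∈ OpLE d n) : A * B ∈ OpLE d (m + n) := by
  refine opLE_induction (P := fun A => A * B ∈ OpLE d (m + n)) d ?_ ?_ ?_ ?_ A hA
  · intro a i hi
    rw [mul_assoc]
    exact mul_opLE d _ ((OpLE_mono d (by omega)) (pow_der_opLE d hd hB i))
  · simpa using (OpLE d (m+n)).zero_mem
  · intro x y hx hy; rw [add_mul]; exact add_mem hx hy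
  · intro x hx; rw [end_neg_mul]; exact neg_mem hx

def Rep (a : ℕ → F) (m : ℕ) : AddMonoid.End F :=
  ∑ i ∈ Finset.range (m+1), mulOp (a i) * derOp d ^ i

@[simp] lemma end_zero_mul (f : AddMonoid.End F) : (0 : AddMonoid.End F) * f = 0 := rfl
lemma end_mul_zero (f : AddMonoid.End F) : f * (0 : AddMonoid.End F) = 0 := by
  apply endExt; intro x; simp

lemma rep_mem (a : ℕ → F) (m : ℕ) : Rep d a m ∈ OpLE d m := by
  refine sum_mem fun i hi => gen_mem d _ ?_
  exact Nat.lt_succ_iff.mp (Finset.mem_range.mp hi)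

lemma rep_add (a b : ℕ → F) (m : ℕ) :
    Rep d a m + Rep d b m = Rep d (fun i => a i + b i) m := by
  unfold Rep
  rw [← Finset.sum_add_distrib]
  refine Finset.sum_congr rfl fun i _ => ?_
  rw [mulOp_add, add_mul]

lemma rep_neg (a : ℕ → F) (m : ℕ) : - Rep d a m = Rep d (fun i => -(a i)) m := by
  unfold Rep
  rw [← Finset.sum_neg_distrib]
  refine Finset.sum_congr rfl fun i _ => ?_
  rw [mulOp_neg, end_neg_mul]

lemma rep_sub (a b : ℕ → F) (m : ℕ) :
    Rep d a m - Rep d b m = Rep d (fun i => a i - b i) m := by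
  rw [sub_eq_add_neg, rep_neg, rep_add]
  simp only [← sub_eq_add_neg]

lemma rep_split (a : ℕ → F) (m : ℕ) :
    Rep d a (m+1) = Rep d a m + mulOp (a (m+1)) * derOp d ^ (m+1) := by
  unfold Rep; rw [Finset.sum_range_succ]

lemma rep_single (c : F) (i m : ℕ) (him : i ≤ m) :
    Rep d (fun k => if k = i then c else 0) m = mulOp c * derOp d ^ i := by
  unfold Rep
  rw [Finset.sum_eq_single i]
  · simp
  · intro k _ hk; simp [hk]
  · intro h; exact absurd (Finset.mem_range.mpr (Nat.lt_succ_of_le him)) h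

lemma exists_rep {m : ℕ} {A : AddMonoid.End F} (hA : A ∈ OpLE d m) :
    ∃ a : ℕ → F, A = Rep d a m := by
  refine opLE_induction (P := fun A => ∃ a : ℕ → F, A = Rep d a m) d ?_ ?_ ?_ ?_ A hA
  · intro a i hi
    exact ⟨fun k => if k = i then a else 0, (rep_single d a i m hi).symm⟩
  · exact ⟨fun _ => 0, by simp [Rep]⟩
  · rintro x y ⟨a, rfl⟩ ⟨b, rfl⟩; exact ⟨fun i => a i + b i, rep_add d a b m⟩
  · rintro x ⟨a, rfl⟩; exact ⟨fun i => -(a i), rep_neg d a m⟩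

/-- The Leibniz commutation ladder. -/
lemma leib (hd : IsDeriv d) (i : ℕ) (b : F) :
    derOp d ^ (i+1) * mulOp b - mulOp b * derOp d ^ (i+1)
      - mulOp ((i+1 : ℕ) * d b) * derOp d ^ i ∈ OpLE d (i - 1) := by
  induction i with
  | zero =>
      have : derOp d ^ 1 * mulOp b - mulOp b * derOp d ^ 1
          - mulOp ((1:ℕ) * d b) * derOp d ^ 0 = 0 := by
        rw [pow_one, pow_zero, mul_one, der_mulOp d hd]
        push_cast
        rw [one_mul]
        abel
      rw [this]; exact zero_mem _
  | succ i ih =>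
      rcases Nat.eq_zero_or_pos i with h0 | hpos
      · subst h0
        have hp2 : ∀ x : F, (derOp d ^ 2 : AddMonoid.End F) x = d (d x) := by
          intro x; rw [sq]; rfl
        have : derOp d ^ 2 * mulOp b - mulOp b * derOp d ^ 2
            - mulOp ((2:ℕ) * d b) * derOp d ^ 1 = mulOp (d (d b)) := by
          apply endExt; intro x
          simp only [end_sub_apply, end_mul_apply, mulOp_apply, hp2, pow_one,
            derOp_apply, hd b x, map_add]
          rw [hd (d b) x, hd b (d x)]
          push_cast
          ring
        rw [this]; exact mulOp_mem d _ _
      · -- i ≥ 1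
        set Dn := derOp d
        have key : Dn ^ (i+2) * mulOp b - mulOp b * Dn ^ (i+2)
            - mulOp ((i+2:ℕ) * d b) * Dn ^ (i+1)
            = Dn * (Dn ^ (i+1) * mulOp b - mulOp b * Dn ^ (i+1)
                - mulOp ((i+1:ℕ) * d b) * Dn ^ i)
              + mulOp ((i+1:ℕ) * d (d b)) * Dn ^ i := by
          have e1 : Dn * (mulOp b * Dn ^ (i+1)) = mulOp (d b) * Dn ^ (i+1)
              + mulOp b * Dn ^ (i+2) := by
            rw [← mul_assoc, der_mulOp d hd, add_mul, mul_assoc, ← pow_succ']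
          have e2 : Dn * (mulOp ((i+1:ℕ) * d b) * Dn ^ i)
              = mulOp ((i+1:ℕ) * d (d b)) * Dn ^ i
                + mulOp ((i+1:ℕ) * d b) * Dn ^ (i+1) := by
            rw [← mul_assoc, der_mulOp d hd, add_mul, mul_assoc, ← pow_succ']
            have : d (((i+1:ℕ):F) * d b) = ((i+1:ℕ):F) * d (d b) := by
              have := map_nsmul d (i+1) (d b)
              simpa [nsmul_eq_mul] using this
            rw [this]
          have e3 : Dn * (Dn ^ (i+1) * mulOp b) = Dn ^ (i+2) * mulOp b := by
            rw [← mul_assoc, ← pow_succ']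
          rw [mul_sub, mul_sub, e1, e2, e3]
          have ec : mulOp ((i+2:ℕ) * d b) * Dn ^ (i+1)
              = mulOp (d b) * Dn ^ (i+1) + mulOp ((i+1:ℕ) * d b) * Dn ^ (i+1) := by
            rw [← add_mul, ← mulOp_add]
            congr 2
            push_cast; ring
          rw [ec]
          abel
        rw [key]
        refine add_mem ?_ (gen_mem d _ (by omega))
        have := der_opLE d hd ih
        have harith : (i - 1) + 1 = i := by omega
        rw [harith] at this
        exact (OpLE_mono d (by omega)) this

lemma comm_pow_mulOp (hd : IsDeriv d) (i : ℕ) (b : F) :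
    derOp d ^ i * mulOp b - mulOp b * derOp d ^ i ∈ OpLE d (i - 1) := by
  cases i with
  | zero => simp [end_mul_zero]
  | succ i =>
      have h := leib d hd i b
      have : derOp d ^ (i+1) * mulOp b - mulOp b * derOp d ^ (i+1)
          = (derOp d ^ (i+1) * mulOp b - mulOp b * derOp d ^ (i+1)
            - mulOp ((i+1:ℕ) * d b) * derOp d ^ i)
            + mulOp ((i+1:ℕ) * d b) * derOp d ^ i := by abel
      rw [this]
      exact add_mem ((OpLE_mono d (by omega)) h) (gen_mem d _ (by omega))

/-- Commutator with a multiplication operator lowers order. -/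
lemma brk0 (hd : IsDeriv d) {m : ℕ} (b : F) {A : AddMonoid.End F} (hA : A ∈ OpLE d m) :
    mulOp b * A - A * mulOp b ∈ OpLE d (m - 1) := by
  refine opLE_induction (P := fun A => mulOp b * A - A * mulOp b ∈ OpLE d (m-1)) d
    ?_ ?_ ?_ ?_ A hA
  · intro a i hi
    have key : mulOp b * (mulOp a * derOp d ^ i) - mulOp a * derOp d ^ i * mulOp b
        = - (mulOp a * (derOp d ^ i * mulOp b - mulOp b * derOp d ^ i)) := by
      have h1 : mulOp b * (mulOp a * derOp d ^ i)
          = mulOp a * (mulOp b * derOp d ^ i) := by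
        rw [← mul_assoc, mulOp_comm, mul_assoc]
      have h2 : mulOp a * derOp d ^ i * mulOp b
          = mulOp a * (derOp d ^ i * mulOp b) := mul_assoc _ _ _
      rw [h1, h2, mul_sub]
      abel
    rw [key]
    refine neg_mem (mul_opLE d _ ((OpLE_mono d ?_) (comm_pow_mulOp d hd i b)))
    omega
  · simp [end_mul_zero]
  · intro x y hx hy
    have : mulOp b * (x + y) - (x + y) * mulOp b
        = (mulOp b * x - x * mulOp b) + (mulOp b * y - y * mulOp b) := by
      rw [mul_add, add_mul]; abel
    rw [this]; exact add_mem hx hy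
  · intro x hx
    have : mulOp b * (-x) - (-x) * mulOp b = -(mulOp b * x - x * mulOp b) := by
      rw [end_mul_neg, end_neg_mul]; abel
    rw [this]; exact neg_mem hx

/-- Multiplication by a constant commutes with differential operators. -/
lemma central (hd : IsDeriv d) {c : F} (hc : d c = 0) {m : ℕ} {A : AddMonoid.End F}
    (hA : A ∈ OpLE d m) : mulOp c * A = A * mulOp c := by
  have hpow : ∀ i : ℕ, derOp d ^ i * mulOp c = mulOp c * derOp d ^ i := by
    intro i
    induction i with
    | zero => simp
    | succ i ih =>
        rw [pow_succ, mul_assoc, der_mulOp d hd, hc, mulOp_zero, zero_add,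
          ← mul_assoc, ih, mul_assoc, ← pow_succ]
  refine opLE_induction (P := fun A => mulOp c * A = A * mulOp c) d ?_ ?_ ?_ ?_ A hA
  · intro a i _
    rw [← mul_assoc, mulOp_comm, mul_assoc, ← hpow i, ← mul_assoc]
  · show mulOp c * 0 = 0 * mulOp c
    rw [end_mul_zero, end_zero_mul]
  · intro x y hx hy; rw [mul_add, add_mul, hx, hy]
  · intro x hx; rw [end_mul_neg, end_neg_mul, hx]

variable [CharZero F]

lemma d_one (hd : IsDeriv d) : d 1 = 0 := by
  have := hd 1 1
  simp at this
  exact this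

lemma rep_congr {a b : ℕ → F} {m : ℕ} (h : ∀ i ≤ m, a i = b i) :
    Rep d a m = Rep d b m := by
  unfold Rep
  refine Finset.sum_congr rfl fun i hi => ?_
  rw [h i (Nat.lt_succ_iff.mp (Finset.mem_range.mp hi))]

lemma rep_extend {a : ℕ → F} {m m' : ℕ} (hmm : m ≤ m')
    (h : ∀ i, m < i → i ≤ m' → a i = 0) : Rep d a m' = Rep d a m := by
  unfold Rep
  refine (Finset.sum_subset ?_ ?_).symm
  · exact Finset.range_subset_range.mpr (by omega)
  · intro i hi hni
    have h1 : i < m' + 1 := Finset.mem_range.mp hi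
    have h2 : ¬ i < m + 1 := fun hc => hni (Finset.mem_range.mpr hc)
    rw [h i (by omega) (by omega), mulOp_zero, end_zero_mul]

/-- Faithfulness: a vanishing differential operator has vanishing coefficients. -/
lemma faith (hd : IsDeriv d) (hd0 : ∃ b, d b ≠ 0) :
    ∀ k, ∀ a : ℕ → F, Rep d a k = 0 → ∀ i ≤ k, a i = 0 := by
  intro k
  induction k with
  | zero =>
      intro a h i hi
      interval_cases i
      have := congrArg (fun f : AddMonoid.End F => f 1) h
      simpa [Rep] using this
  | succ k ih =>
      intro a h
      obtain ⟨b, hb⟩ := hd0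
      -- first, the top coefficient vanishes
      have htop : a (k+1) = 0 := by
        rcases Nat.eq_zero_or_pos k with rfl | hk
        · -- k = 0 : direct argument
          have h1 := congrArg (fun f : AddMonoid.End F => f 1) h
          have hb1 := congrArg (fun f : AddMonoid.End F => f b) h
          simp [Rep, Finset.sum_range_succ, d_one d hd] at h1 hb1
          -- h1 : a 0 = 0, hb1 : a 0 * b + a 1 * d b = 0
          rw [h1, zero_mul, zero_add] at hb1
          rcases mul_eq_zero.mp hb1 with h' | h'
          · exact h'
          · exact absurd h' hb
        · -- k ≥ 1 : commutator argument
          -- the commutator of Rep a (k+1) with mulOp b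
          have Csum : Rep d a (k+1) * mulOp b - mulOp b * Rep d a (k+1)
              = ∑ i ∈ Finset.range (k+2),
                  mulOp (a i) * (derOp d ^ i * mulOp b - mulOp b * derOp d ^ i) := by
            unfold Rep
            rw [Finset.sum_mul, Finset.mul_sum, ← Finset.sum_sub_distrib]
            refine Finset.sum_congr rfl fun i _ => ?_
            have h1 : mulOp b * (mulOp (a i) * derOp d ^ i)
                = mulOp (a i) * (mulOp b * derOp d ^ i) := by
              rw [← mul_assoc, mulOp_comm, mul_assoc]
            rw [h1, mul_assoc, ← mul_sub]
          have hC0 : ∑ i ∈ Finset.range (k+2),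
              mulOp (a i) * (derOp d ^ i * mulOp b - mulOp b * derOp d ^ i) = 0 := by
            rw [← Csum, h, end_zero_mul, end_mul_zero, sub_zero]
          set main : AddMonoid.End F
            := mulOp (a (k+1) * ((k+1:ℕ) * d b)) * derOp d ^ k with hmain
          have hmem : (∑ i ∈ Finset.range (k+2),
              mulOp (a i) * (derOp d ^ i * mulOp b - mulOp b * derOp d ^ i)) - main
              ∈ OpLE d (k-1) := by
            rw [Finset.sum_range_succ, add_sub_assoc]
            refine add_mem (sum_mem fun i hi => ?_) ?_
            · refine mul_opLE d _ ((OpLE_mono d ?_) (comm_pow_mulOp d hd i b))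
              have := Finset.mem_range.mp hi; omega
            · rw [hmain, mulOp_mul, mul_assoc, ← mul_sub]
              exact mul_opLE d _ (leib d hd k b)
          rw [hC0, zero_sub] at hmem
          have hmem2 : main ∈ OpLE d (k-1) := by simpa using neg_mem hmem
          -- view main as a representation of order k and use the IH
          obtain ⟨e, he⟩ := exists_rep d ((OpLE_mono d (by omega : k-1 ≤ k-1)) hmem2)
          have he' : Rep d e (k-1) = Rep d
              (fun i => if i = k then 0 else e i) k := by
            have : Rep d (fun i => if i = k then 0 else e i) k
                = Rep d (fun i => if i = k then 0 else e i) (k-1) := by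
              refine rep_extend d (by omega) fun i h1 h2 => ?_
              have : i = k := by omega
              simp [this]
            rw [this]
            exact rep_congr d fun i hi => by
              have : i ≠ k := by omega
              simp [this]
          have hz : Rep d (fun i => (if i = k then 0 else e i)
              - (if i = k then a (k+1) * ((k+1:ℕ) * d b) else 0)) k = 0 := by
            rw [← rep_sub]
            rw [← he', ← he]
            have : Rep d (fun i => if i = k then a (k+1) * ((k+1:ℕ) * d b) else 0) k
                = main := rep_single d _ k k le_rfl
            rw [this, sub_self]
          have hek := ih _ hz k le_rfl
          have hek' : a (k+1) * (((k+1:ℕ):F) * d b) = 0 := by simpa using hek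
          have hnz : ((k+1:ℕ) : F) * d b ≠ 0 := by
            apply mul_ne_zero _ hb
            exact Nat.cast_ne_zero.mpr (by omega)
          exact (mul_eq_zero.mp hek').resolve_right hnz
      have hrep : Rep d a k = 0 := by
        have := rep_split d a k
        rw [htop, mulOp_zero, end_zero_mul, add_zero] at this
        rw [← this, h]
      intro i hi
      rcases Nat.lt_succ_iff_lt_or_eq.mp (Nat.lt_succ_of_le hi) with h' | h'
      · exact ih _ hrep i (by omega)
      · rw [h']; exact htop

lemma rep_unique (hd : IsDeriv d) (hd0 : ∃ b, d b ≠ 0) {a b : ℕ → F} {m : ℕ}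
    (h : Rep d a m = Rep d b m) : ∀ i ≤ m, a i = b i := by
  intro i hi
  have : Rep d (fun i => a i - b i) m = 0 := by rw [← rep_sub, h, sub_self]
  have := faith d hd hd0 m _ this i hi
  simpa [sub_eq_zero] using this

lemma opLE_coeff_zero (hd : IsDeriv d) (hd0 : ∃ b, d b ≠ 0) {a : ℕ → F} {m k : ℕ}
    (h : Rep d a m ∈ OpLE d k) {i : ℕ} (hki : k < i) (him : i ≤ m) : a i = 0 := by
  obtain ⟨b, hb⟩ := exists_rep d h
  set b' : ℕ → F := fun j => if j ≤ k then b j else 0 with hb'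
  have h1 : Rep d b k = Rep d b' m := by
    have e1 : Rep d b' m = Rep d b' k := rep_extend d (by omega) fun j hj1 _ => by
      simp [hb', Nat.not_le.mpr hj1]
    rw [e1]
    exact rep_congr d fun j hj => by simp [hb', hj]
  have := rep_unique d hd hd0 (a := a) (b := b') (m := m) (by rw [← h1, ← hb]) i him
  rw [this]
  simp [hb', Nat.not_le.mpr hki]

lemma single_coeff (hd : IsDeriv d) (hd0 : ∃ b, d b ≠ 0) {c : F} {i k : ℕ}
    (h : mulOp c * derOp d ^ i ∈ OpLE d k) (hki : k < i) : c = 0 := by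
  have hr : Rep d (fun j => if j = i then c else 0) i = mulOp c * derOp d ^ i :=
    rep_single d c i i le_rfl
  have := opLE_coeff_zero d hd hd0 (by rw [hr]; exact h) hki le_rfl
  simpa using this



lemma opLE_zero {A : AddMonoid.End F} (hA : A ∈ OpLE d 0) : ∃ b : F, A = mulOp b := by
  refine opLE_induction (P := fun A => ∃ b : F, A = mulOp b) d ?_ ?_ ?_ ?_ A hA
  · intro a i hi
    interval_cases i
    exact ⟨a, by rw [pow_zero, mul_one]⟩
  · exact ⟨0, by rw [mulOp_zero]⟩
  · rintro x y ⟨u, rfl⟩ ⟨v, rfl⟩; exact ⟨u + v, by rw [mulOp_add]⟩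
  · rintro x ⟨u, rfl⟩; exact ⟨-u, by rw [mulOp_neg]⟩

section WithL

variable {L : AddMonoid.End F} {n : ℕ}

lemma d_ne_zero (hn : 1 ≤ n) (hL : MonicOrd d L n) : ∃ b, d b ≠ 0 := by
  by_contra hcon
  push_neg at hcon
  have hder : derOp d = 0 := by apply endExt; intro x; simp [hcon x]
  have hL0 : L ∈ OpLE d 0 := by
    refine opLE_induction (P := fun A => A ∈ OpLE d 0) d ?_ ?_ ?_ ?_ L hL.1.1
    · intro a i _
      rcases Nat.eq_zero_or_pos i with rfl | hi
      · rw [pow_zero, mul_one]; exact mulOp_mem d a 0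
      · rw [hder, zero_pow (by omega), end_mul_zero]; exact zero_mem _
    · exact zero_mem _
    · intro x y hx hy; exact add_mem hx hy
    · intro x hx; exact neg_mem hx
  have := hL.1.2 0 hL0
  omega

lemma pow_monic (hd : IsDeriv d) (hn : 1 ≤ n) (hL : MonicOrd d L n) : ∀ k, 1 ≤ k →
    L ^ k ∈ OpLE d (n*k) ∧ L ^ k - derOp d ^ (n*k) ∈ OpLE d (n*k - 1) := by
  intro k hk
  induction k, hk using Nat.le_induction with
  | base =>
      rw [pow_one, mul_one]
      exact ⟨hL.1.1, hL.2⟩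
  | succ k hk ih =>
      have hexp : n * (k+1) = n * k + n := by ring
      have hnk : 1 ≤ n * k := Nat.mul_pos (by omega) (by omega)
      constructor
      · rw [hexp, pow_succ]
        exact opLE_mul d hd ih.1 hL.1.1
      · have key : L ^ (k+1) - derOp d ^ (n*(k+1))
            = (L ^ k - derOp d ^ (n*k)) * L + derOp d ^ (n*k) * (L - derOp d ^ n) := by
          rw [sub_mul, mul_sub, hexp, pow_add (derOp d) (n*k) n, pow_succ L k]
          abel
        rw [key]
        have m1 := opLE_mul d hd ih.2 hL.1.1
        have m2 := opLE_mul d hd (derOp_pow_mem d (le_rfl : n*k ≤ n*k)) hL.2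
        exact add_mem (OpLE_mono d (show n*k-1+n ≤ n*(k+1)-1 by omega) m1)
          (OpLE_mono d (show n*k+(n-1) ≤ n*(k+1)-1 by omega) m2)

/-- Top-symbol formula for the commutator with `L`. -/
lemma comm_top (hd : IsDeriv d) (hn : 1 ≤ n)
    (hnf : L - derOp d ^ n ∈ OpLE d (n - 2)) (a : ℕ → F) (m : ℕ) :
    L * Rep d a m - Rep d a m * L
      - mulOp (((n:ℕ):F) * d (a m)) * derOp d ^ (m + n - 1) ∈ OpLE d (m + n - 2) := by
  set N := L - derOp d ^ n with hN
  have hNmem : N ∈ OpLE d (n - 2) := hnf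
  have hLdef : L = derOp d ^ n + N := by rw [hN]; abel
  set A := Rep d a m with hA
  have hsplit : L * A - A * L
      = (derOp d ^ n * A - A * derOp d ^ n) + (N * A - A * N) := by
    rw [hLdef, add_mul, mul_add]; abel
  rcases Nat.lt_or_ge n 2 with h1 | h2
  · -- n = 1
    have hn1 : n = 1 := by omega
    subst hn1
    obtain ⟨b, hb⟩ := opLE_zero d hNmem
    have hDA : derOp d ^ 1 * A - A * derOp d ^ 1 = Rep d (fun i => d (a i)) m := by
      rw [pow_one, hA]
      unfold Rep
      rw [Finset.mul_sum, Finset.sum_mul, ← Finset.sum_sub_distrib]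
      refine Finset.sum_congr rfl fun i _ => ?_
      have e1 : derOp d * (mulOp (a i) * derOp d ^ i)
          = mulOp (d (a i)) * derOp d ^ i + mulOp (a i) * derOp d ^ (i+1) := by
        rw [← mul_assoc, der_mulOp d hd, add_mul, mul_assoc, ← pow_succ']
      have e2 : mulOp (a i) * derOp d ^ i * derOp d = mulOp (a i) * derOp d ^ (i+1) := by
        rw [mul_assoc, ← pow_succ]
      rw [e1, e2]
      abel
    have hgoal : L * A - A * L - mulOp (((1:ℕ):F) * d (a m)) * derOp d ^ (m + 1 - 1)
        = (Rep d (fun i => d (a i)) m - mulOp (d (a m)) * derOp d ^ m)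
          + (N * A - A * N) := by
      rw [hsplit, hDA]
      have : (((1:ℕ):F) * d (a m)) = d (a m) := by
        rw [Nat.cast_one, one_mul]
      rw [this]
      have : m + 1 - 1 = m := by omega
      rw [this]
      abel
    rw [hgoal]
    refine add_mem ?_ ?_
    · rcases Nat.eq_zero_or_pos m with rfl | hm
      · have : Rep d (fun i => d (a i)) 0 = mulOp (d (a 0)) * derOp d ^ 0 := by
          unfold Rep; rw [Finset.sum_range_one]
        rw [this, sub_self]
        exact zero_mem _
      · have hsp := rep_split d (fun i => d (a i)) (m-1)
        have hm1 : m - 1 + 1 = m := by omega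
        rw [hm1] at hsp
        rw [hsp]
        have : Rep d (fun i => d (a i)) (m-1) + mulOp (d (a m)) * derOp d ^ m
            - mulOp (d (a m)) * derOp d ^ m = Rep d (fun i => d (a i)) (m-1) := by abel
        rw [this]
        exact (OpLE_mono d (by omega)) (rep_mem d _ _)
    · rw [hb]
      have : m + 1 - 2 = m - 1 := by omega
      rw [this]
      exact brk0 d hd b (rep_mem d a m)
  · -- n ≥ 2
    have hNA : N * A - A * N ∈ OpLE d (m + n - 2) := by
      refine sub_mem ((OpLE_mono d (by omega)) (opLE_mul d hd hNmem (rep_mem d a m)))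
        ((OpLE_mono d (by omega)) (opLE_mul d hd (rep_mem d a m) hNmem))
    set S : AddMonoid.End F := ∑ i ∈ Finset.range (m+1),
      mulOp (((n:ℕ):F) * d (a i)) * derOp d ^ (n - 1) * derOp d ^ i with hS
    have claim1 : derOp d ^ n * A - A * derOp d ^ n - S ∈ OpLE d (m + n - 2) := by
      have hrw : derOp d ^ n * A - A * derOp d ^ n - S
          = ∑ i ∈ Finset.range (m+1),
              (derOp d ^ n * mulOp (a i) - mulOp (a i) * derOp d ^ n
                - mulOp (((n:ℕ):F) * d (a i)) * derOp d ^ (n-1)) * derOp d ^ i := by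
        rw [hA]
        unfold Rep
        rw [Finset.mul_sum, Finset.sum_mul, hS, ← Finset.sum_sub_distrib,
          ← Finset.sum_sub_distrib]
        refine Finset.sum_congr rfl fun i _ => ?_
        rw [sub_mul, sub_mul, ← mul_assoc]
        have e1 : mulOp (a i) * derOp d ^ i * derOp d ^ n
            = mulOp (a i) * derOp d ^ n * derOp d ^ i := by
          rw [mul_assoc, mul_assoc, ← pow_add, ← pow_add, Nat.add_comm]
        rw [e1]
      rw [hrw]
      refine sum_mem fun i hi => ?_
      have him : i ≤ m := Nat.lt_succ_iff.mp (Finset.mem_range.mp hi)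
      have hleib := leib d hd (n-1) (a i)
      have hn1 : n - 1 + 1 = n := by omega
      rw [hn1] at hleib
      have := opLE_mul_pow d hleib i
      refine (OpLE_mono d (by omega)) this
    have claim2 : S - mulOp (((n:ℕ):F) * d (a m)) * derOp d ^ (m + n - 1)
        ∈ OpLE d (m + n - 2) := by
      rw [hS, Finset.sum_range_succ]
      have etop : mulOp (((n:ℕ):F) * d (a m)) * derOp d ^ (n - 1) * derOp d ^ m
          = mulOp (((n:ℕ):F) * d (a m)) * derOp d ^ (m + n - 1) := by
        rw [mul_assoc, ← pow_add]
        have : n - 1 + m = m + n - 1 := by omega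
        rw [this]
      rw [etop]
      have : (∑ i ∈ Finset.range m,
            mulOp (((n:ℕ):F) * d (a i)) * derOp d ^ (n - 1) * derOp d ^ i)
          + mulOp (((n:ℕ):F) * d (a m)) * derOp d ^ (m + n - 1)
          - mulOp (((n:ℕ):F) * d (a m)) * derOp d ^ (m + n - 1)
          = ∑ i ∈ Finset.range m,
            mulOp (((n:ℕ):F) * d (a i)) * derOp d ^ (n - 1) * derOp d ^ i := by abel
      rw [this]
      refine sum_mem fun i hi => ?_
      have him : i < m := Finset.mem_range.mp hi
      rw [mul_assoc, ← pow_add]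
      exact gen_mem d _ (by omega)
    have total : L * A - A * L - mulOp (((n:ℕ):F) * d (a m)) * derOp d ^ (m + n - 1)
        = (derOp d ^ n * A - A * derOp d ^ n - S)
          + (S - mulOp (((n:ℕ):F) * d (a m)) * derOp d ^ (m + n - 1))
          + (N * A - A * N) := by
      rw [hsplit]; abel
    rw [total]
    exact add_mem (add_mem claim1 claim2) hNA

/-- Commuting (or almost-commuting, for `n ≥ 2`) operators have constant top coefficient. -/
lemma const_top (hd : IsDeriv d) (hn : 1 ≤ n)
    (hnf : L - derOp d ^ n ∈ OpLE d (n - 2)) (hd0 : ∃ b, d b ≠ 0) (a : ℕ → F) (m : ℕ)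
    (H : L * Rep d a m = Rep d a m * L ∨ (2 ≤ n ∧ L * Rep d a m - Rep d a m * L ∈ OpLE d (n-2))) :
    d (a m) = 0 := by
  have hct := comm_top d hd hn hnf a m
  rcases Nat.eq_zero_or_pos (m + n - 1) with hz | hpos
  · -- m = 0, n = 1
    have hm : m = 0 := by omega
    have hn1 : n = 1 := by omega
    subst hm; subst hn1
    have hcomm : L * Rep d a 0 = Rep d a 0 * L := by
      rcases H with h | h
      · exact h
      · omega
    obtain ⟨b, hb⟩ := opLE_zero d (hnf : L - derOp d ^ 1 ∈ OpLE d 0)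
    have hL1 : L = derOp d + mulOp b := by
      rw [← hb, pow_one]; abel
    have hA0 : Rep d a 0 = mulOp (a 0) := by
      unfold Rep; rw [Finset.sum_range_one, pow_zero, mul_one]
    have : mulOp (d (a 0)) = 0 := by
      have e : L * Rep d a 0 - Rep d a 0 * L = mulOp (d (a 0)) := by
        rw [hL1, hA0, add_mul, mul_add, der_mulOp d hd, mulOp_comm]
        abel
      rw [hcomm, sub_self] at e
      exact e.symm
    have := mulOp_inj (a := d (a 0)) (b := 0) (by rw [this, mulOp_zero])
    exact this
  · have hmain : mulOp (((n:ℕ):F) * d (a m)) * derOp d ^ (m + n - 1)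
        ∈ OpLE d (m + n - 2) := by
      rcases H with h | ⟨h2, hmem⟩
      · have : L * Rep d a m - Rep d a m * L = 0 := by rw [h, sub_self]
        rw [this, zero_sub] at hct
        simpa using neg_mem hct
      · have e : mulOp (((n:ℕ):F) * d (a m)) * derOp d ^ (m + n - 1)
            = (L * Rep d a m - Rep d a m * L)
              - (L * Rep d a m - Rep d a m * L
                  - mulOp (((n:ℕ):F) * d (a m)) * derOp d ^ (m + n - 1)) := by abel
        rw [e]
        exact sub_mem ((OpLE_mono d (by omega)) hmem) hct
    have := single_coeff d hd hd0 hmain (by omega)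
    have hnz : ((n:ℕ):F) ≠ 0 := Nat.cast_ne_zero.mpr (by omega)
    rcases mul_eq_zero.mp this with h | h
    · exact absurd h hnz
    · exact h

end WithL

lemma single_sum (c : F) (k M : ℕ) (X : ℕ → AddMonoid.End F) (h : k ≤ M) :
    ∑ i ∈ Finset.range (M+1), mulOp (if i = k then c else 0) * X i
      = mulOp c * X k := by
  rw [Finset.sum_eq_single k]
  · simp
  · intro i _ hik; rw [if_neg hik, mulOp_zero, end_zero_mul]
  · intro hk; exact absurd (Finset.mem_range.mpr (Nat.lt_succ_of_le h)) hk

lemma jset_mem {n m j : ℕ} : j ∈ Jset n m ↔ j ≤ m ∧ ¬ n ∣ j := by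
  simp [Jset, Finset.mem_filter, Finset.mem_range, Nat.lt_succ_iff]

lemma jset_zero (n : ℕ) : Jset n 0 = ∅ := by
  ext j; simp [jset_mem]; intro h; subst h; exact dvd_zero n

lemma jset_dvd {n m : ℕ} (h : n ∣ (m+1)) : Jset n (m+1) = Jset n m := by
  ext j
  simp only [jset_mem]
  constructor
  · rintro ⟨h1, h2⟩
    refine ⟨?_, h2⟩
    rcases Nat.lt_succ_iff_lt_or_eq.mp (Nat.lt_succ_of_le h1) with h' | h'
    · omega
    · exact absurd (h' ▸ h) h2
  · rintro ⟨h1, h2⟩; exact ⟨by omega, h2⟩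

lemma jset_not_dvd {n m : ℕ} (h : ¬ n ∣ (m+1)) :
    Jset n (m+1) = insert (m+1) (Jset n m) := by
  ext j
  simp only [jset_mem, Finset.mem_insert]
  constructor
  · rintro ⟨h1, h2⟩
    rcases Nat.lt_succ_iff_lt_or_eq.mp (Nat.lt_succ_of_le h1) with h' | h'
    · exact Or.inr ⟨by omega, h2⟩
    · exact Or.inl h'
  · rintro (rfl | ⟨h1, h2⟩)
    · exact ⟨le_rfl, h⟩
    · exact ⟨by omega, h2⟩

lemma jset_mono {n m : ℕ} : Jset n m ⊆ Jset n (m+1) := by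
  intro j hj
  rw [jset_mem] at hj ⊢
  exact ⟨by omega, hj.2⟩

lemma not_mem_jset_succ {n m : ℕ} : (m+1) ∉ Jset n m := by
  rw [jset_mem]; omega

lemma theta_opLE {B : ℕ → AddMonoid.End F} (hB : ∀ j, B j ∈ OpLE d j)
    (c : ℕ → F) (n m : ℕ) : theta c B (Jset n m) ∈ OpLE d m := by
  refine sum_mem fun j hj => ?_
  have := (jset_mem.mp hj).1
  exact mul_opLE d _ ((OpLE_mono d this) (hB j))

section WithL2
variable {L : AddMonoid.End F} {n : ℕ}

lemma pow_opLE (hd : IsDeriv d) (hn : 1 ≤ n) (hL : MonicOrd d L n) (i : ℕ) :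
    L ^ i ∈ OpLE d (n * i) := by
  rcases Nat.eq_zero_or_pos i with rfl | hi
  · rw [pow_zero, Nat.mul_zero]
    rw [← mulOp_one (F := F)]
    exact mulOp_mem d 1 0
  · exact (pow_monic d hd hn hL i hi).1

lemma sum_L_comm (hd : IsDeriv d) (hL : MonicOrd d L n) (e : ℕ → F)
    (he : ∀ i, d (e i) = 0) (N : ℕ) :
    L * (∑ i ∈ Finset.range (N+1), mulOp (e i) * L ^ i)
      = (∑ i ∈ Finset.range (N+1), mulOp (e i) * L ^ i) * L := by
  rw [Finset.mul_sum, Finset.sum_mul]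
  refine Finset.sum_congr rfl fun i _ => ?_
  rw [← mul_assoc, ← central d hd (he i) hL.1.1, mul_assoc, mul_assoc,
    ← pow_succ', ← pow_succ]

lemma cpoly_of (hd : IsDeriv d) {N : ℕ} {c : ℕ → F} (hc : ∀ i, d (c i) = 0) :
    (∑ i ∈ Finset.range (N+1), mulOp (c i) * L ^ i) ∈ CPoly d L := by
  classical
  set p : Polynomial F :=
    ∑ i ∈ Finset.range (N+1), Polynomial.C (c i) * Polynomial.X ^ i with hp
  have hcoeff : ∀ k, p.coeff k = if k ∈ Finset.range (N+1) then c k else 0 := by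
    intro k
    rw [hp, Polynomial.finset_sum_coeff]
    simp only [Polynomial.coeff_C_mul, Polynomial.coeff_X_pow, mul_ite, mul_one, mul_zero]
    rw [Finset.sum_ite_eq (Finset.range (N+1)) k c]
  have hdc : ∀ k, d (p.coeff k) = 0 := by
    intro k
    rw [hcoeff]
    split_ifs
    · exact hc k
    · exact map_zero d
  have hdeg : p.natDegree ≤ N := by
    refine Polynomial.natDegree_le_iff_coeff_eq_zero.mpr fun k hk => ?_
    rw [hcoeff, if_neg]
    simp only [Finset.mem_range]
    omega
  refine ⟨p, hdc, ?_⟩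
  rw [Finset.sum_subset (Finset.range_subset_range.mpr (by omega : p.natDegree + 1 ≤ N + 1))]
  · refine (Finset.sum_congr rfl fun i hi => ?_).symm
    rw [hcoeff, if_pos hi]
  · intro i hi hni
    have : p.natDegree < i := by
      simp only [Finset.mem_range] at hi hni; omega
    rw [Polynomial.coeff_eq_zero_of_natDegree_lt this, mulOp_zero, end_zero_mul]

lemma cpoly_rep {P : AddMonoid.End F} (h : P ∈ CPoly d L) :
    ∃ (N : ℕ) (c : ℕ → F), (∀ i, d (c i) = 0) ∧
      P = ∑ i ∈ Finset.range (N+1), mulOp (c i) * L ^ i := by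
  obtain ⟨p, h1, h2⟩ := h
  exact ⟨p.natDegree, p.coeff, h1, h2⟩

end WithL2

section Main
variable {L : AddMonoid.End F} {n : ℕ} {B : ℕ → AddMonoid.End F}

/-- The main induction: every (almost-)commuting operator of order `≤ m` splits as a
constant combination of the `B j`, `j ∈ J_{n,m}`, plus a constant polynomial in `L`. -/
lemma main_split (hd : IsDeriv d) (hn : 1 ≤ n) (hL : MonicOrd d L n)
    (hnf : L - derOp d ^ n ∈ OpLE d (n - 2))
    (hB : ∀ j, B j ∈ OpLE d j ∧ B j - derOp d ^ j ∈ OpLE d (j - 1) ∧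
      L * B j - B j * L ∈ OpLE d (n - 2)) :
    ∀ m (Q : AddMonoid.End F), Q ∈ OpLE d m →
      (L * Q = Q * L ∨ (2 ≤ n ∧ L * Q - Q * L ∈ OpLE d (n-2))) →
      ∃ c : ℕ → F, (∀ j, d (c j) = 0) ∧ (∀ j ∉ Jset n m, c j = 0) ∧
        ∃ (P : AddMonoid.End F) (e : ℕ → F), (∀ i, d (e i) = 0) ∧
          P = ∑ i ∈ Finset.range (m+1), mulOp (e i) * L ^ i ∧
          P ∈ OpLE d m ∧ Q = theta c B (Jset n m) + P := by
  have hd0 : ∃ b, d b ≠ 0 := d_ne_zero d hn hL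
  intro m
  induction m with
  | zero =>
      intro Q hQ H
      obtain ⟨b, rfl⟩ := opLE_zero d hQ
      have hb : d b = 0 := by
        have ha0 : Rep d (fun _ => b) 0 = mulOp b := by
          unfold Rep; rw [Finset.sum_range_one, pow_zero, mul_one]
        have := const_top d hd hn hnf hd0 (fun _ => b) 0 (by rw [ha0]; exact H)
        exact this
      refine ⟨0, by simp, by simp, mulOp b, fun _ => b, fun _ => hb, ?_, ?_, ?_⟩
      · rw [Finset.sum_range_one, pow_zero, mul_one]
      · exact mulOp_mem d b 0
      · rw [jset_zero]
        unfold theta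
        rw [Finset.sum_empty, zero_add]
  | succ m ih =>
      intro Q hQ H
      obtain ⟨a, rfl⟩ := exists_rep d hQ
      set α := a (m+1) with hαdef
      have hα : d α = 0 := const_top d hd hn hnf hd0 a (m+1) H
      by_cases hdvd : n ∣ (m+1)
      · -- subtract a multiple of a power of L
        set k := (m+1) / n with hkdef
        have hnk : n * k = m + 1 := Nat.mul_div_cancel' hdvd
        have hk1 : 1 ≤ k := by
          rcases Nat.eq_zero_or_pos k with h0 | h1
          · rw [h0] at hnk; omega
          · exact h1
        set Q' := Rep d a (m+1) - mulOp α * L ^ k with hQ'def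
        have hQ'eq : Q' = Rep d a m - mulOp α * (L ^ k - derOp d ^ (n*k)) := by
          rw [hQ'def, rep_split d a m, hnk, mul_sub]
          abel
        have hQ'mem : Q' ∈ OpLE d m := by
          rw [hQ'eq]
          refine sub_mem (rep_mem d a m) (mul_opLE d _ ?_)
          exact (OpLE_mono d (show n*k - 1 ≤ m by omega)) (pow_monic d hd hn hL k hk1).2
        have hLα : L * (mulOp α * L ^ k) = (mulOp α * L ^ k) * L := by
          rw [← mul_assoc, ← central d hd hα hL.1.1, mul_assoc, mul_assoc,
            ← pow_succ', ← pow_succ]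
        have hcomm' : L * Q' - Q' * L = L * Rep d a (m+1) - Rep d a (m+1) * L := by
          rw [hQ'def, mul_sub, sub_mul, hLα]
          abel
        have H' : L * Q' = Q' * L ∨ (2 ≤ n ∧ L * Q' - Q' * L ∈ OpLE d (n-2)) := by
          rcases H with h | ⟨h2, hmem⟩
          · left
            have : L * Q' - Q' * L = 0 := by rw [hcomm', h, sub_self]
            exact sub_eq_zero.mp this
          · right
            exact ⟨h2, by rw [hcomm']; exact hmem⟩
        obtain ⟨c', hc'd, hc's, P', e', he'd, hP'e, hP'm, hQ'split⟩ := ih Q' hQ'mem H'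
        have hJ : Jset n (m+1) = Jset n m := jset_dvd hdvd
        refine ⟨c', hc'd, ?_, P' + mulOp α * L ^ k,
          (fun i => (if i ≤ m then e' i else 0) + (if i = k then α else 0)), ?_, ?_, ?_, ?_⟩
        · intro j hj; exact hc's j (by rwa [← hJ])
        · intro i
          show d ((if i ≤ m then e' i else 0) + (if i = k then α else 0)) = 0
          rw [map_add]
          have e1 : d (if i ≤ m then e' i else 0) = 0 := by
            split_ifs; exacts [he'd i, map_zero d]
          have e2 : d (if i = k then α else 0) = 0 := by
            split_ifs; exacts [hα, map_zero d]
          rw [e1, e2, add_zero]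
        · show P' + mulOp α * L ^ k = ∑ i ∈ Finset.range (m+1+1),
              mulOp ((if i ≤ m then e' i else 0) + (if i = k then α else 0)) * L ^ i
          have hsum : ∑ i ∈ Finset.range (m+1+1),
              mulOp ((if i ≤ m then e' i else 0) + (if i = k then α else 0)) * L ^ i
              = (∑ i ∈ Finset.range (m+1+1), mulOp (if i ≤ m then e' i else 0) * L ^ i)
                + ∑ i ∈ Finset.range (m+1+1), mulOp (if i = k then α else 0) * L ^ i := by
            rw [← Finset.sum_add_distrib]
            refine Finset.sum_congr rfl fun i _ => ?_
            rw [mulOp_add, add_mul]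
          have hzero : ∀ i ∈ Finset.range (m+1+1), i ∉ Finset.range (m+1) →
              mulOp (if i ≤ m then e' i else 0) * L ^ i = 0 := by
            intro i hi hni
            have h1 : i < m+1+1 := Finset.mem_range.mp hi
            have h2 : ¬ i < m+1 := fun hc => hni (Finset.mem_range.mpr hc)
            rw [if_neg (show ¬ i ≤ m by omega), mulOp_zero, end_zero_mul]
          have hfirst : ∑ i ∈ Finset.range (m+1+1),
              mulOp (if i ≤ m then e' i else 0) * L ^ i = P' := by
            rw [← Finset.sum_subset
              (Finset.range_subset_range.mpr (show m+1 ≤ m+1+1 by omega)) hzero, hP'e]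
            refine Finset.sum_congr rfl fun i hi => ?_
            have : i ≤ m := by
              have := Finset.mem_range.mp hi; omega
            rw [if_pos this]
          have hkm : k ≤ m+1 := by
            have := Nat.le_mul_of_pos_left k (show 0 < n by omega)
            omega
          have hsec := single_sum α k (m+1) (fun i => L ^ i) hkm
          rw [hsum, hfirst, hsec]
        · refine add_mem ((OpLE_mono d (show m ≤ m+1 by omega)) hP'm) (mul_opLE d _ ?_)
          exact hnk ▸ pow_opLE d hd hn hL k
        · rw [hJ]
          have : Rep d a (m+1) = Q' + mulOp α * L ^ k := by rw [hQ'def]; abel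
          rw [this, hQ'split]
          abel
      · -- subtract a multiple of B (m+1)
        have hn2 : 2 ≤ n := by
          rcases Nat.lt_or_ge n 2 with h | h
          · interval_cases n
            exact absurd (one_dvd _) hdvd
          · exact h
        set Q' := Rep d a (m+1) - mulOp α * B (m+1) with hQ'def
        have hQ'eq : Q' = Rep d a m - mulOp α * (B (m+1) - derOp d ^ (m+1)) := by
          rw [hQ'def, rep_split d a m, mul_sub]
          abel
        have hQ'mem : Q' ∈ OpLE d m := by
          rw [hQ'eq]
          refine sub_mem (rep_mem d a m) (mul_opLE d _ ?_)
          exact (OpLE_mono d (show m+1-1 ≤ m by omega)) (hB (m+1)).2.1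
        have hcomm' : L * Q' - Q' * L
            = (L * Rep d a (m+1) - Rep d a (m+1) * L)
              - mulOp α * (L * B (m+1) - B (m+1) * L) := by
          rw [hQ'def, mul_sub, sub_mul, mul_sub,
            ← mul_assoc, ← central d hd hα hL.1.1, mul_assoc, mul_assoc]
          abel
        have H' : L * Q' = Q' * L ∨ (2 ≤ n ∧ L * Q' - Q' * L ∈ OpLE d (n-2)) := by
          right
          refine ⟨hn2, ?_⟩
          rw [hcomm']
          refine sub_mem ?_ (mul_opLE d _ (hB (m+1)).2.2)
          rcases H with h | ⟨_, hmem⟩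
          · rw [h, sub_self]; exact zero_mem _
          · exact hmem
        obtain ⟨c', hc'd, hc's, P', e', he'd, hP'e, hP'm, hQ'split⟩ := ih Q' hQ'mem H'
        have hJ : Jset n (m+1) = insert (m+1) (Jset n m) := jset_not_dvd hdvd
        set c := Function.update c' (m+1) α with hcdef
        have hcs : ∀ j, j ≠ m+1 → c j = c' j := by
          intro j hj; rw [hcdef, Function.update_apply, if_neg hj]
        have htheta : theta c B (Jset n (m+1))
            = mulOp α * B (m+1) + theta c' B (Jset n m) := by
          unfold theta
          rw [hJ, Finset.sum_insert not_mem_jset_succ]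
          congr 1
          · rw [hcdef, Function.update_self]
          · refine Finset.sum_congr rfl fun j hj => ?_
            have : j ≤ m := (jset_mem.mp hj).1
            rw [hcs j (by omega)]
        refine ⟨c, ?_, ?_, P', (fun i => if i ≤ m then e' i else 0), ?_, ?_, ?_, ?_⟩
        · intro j
          rw [hcdef, Function.update_apply]
          split_ifs
          · exact hα
          · exact hc'd j
        · intro j hj
          rw [hJ, Finset.mem_insert] at hj
          push_neg at hj
          rw [hcs j hj.1]
          exact hc's j hj.2
        · intro i
          show d (if i ≤ m then e' i else 0) = 0
          split_ifs; exacts [he'd i, map_zero d]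
        · show P' = ∑ i ∈ Finset.range (m+1+1), mulOp (if i ≤ m then e' i else 0) * L ^ i
          have hzero : ∀ i ∈ Finset.range (m+1+1), i ∉ Finset.range (m+1) →
              mulOp (if i ≤ m then e' i else 0) * L ^ i = 0 := by
            intro i hi hni
            have h1 : i < m+1+1 := Finset.mem_range.mp hi
            have h2 : ¬ i < m+1 := fun hc => hni (Finset.mem_range.mpr hc)
            rw [if_neg (show ¬ i ≤ m by omega), mulOp_zero, end_zero_mul]
          rw [← Finset.sum_subset
            (Finset.range_subset_range.mpr (show m+1 ≤ m+1+1 by omega)) hzero, hP'e]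
          refine Finset.sum_congr rfl fun i hi => ?_
          have : i ≤ m := by
            have := Finset.mem_range.mp hi; omega
          rw [if_pos this]
        · exact (OpLE_mono d (show m ≤ m+1 by omega)) hP'm
        · rw [htheta]
          have : Rep d a (m+1) = Q' + mulOp α * B (m+1) := by rw [hQ'def]; abel
          rw [this, hQ'split]
          abel

end Main

end VmAux

/-- For every `m`, the map `c ↦ ∑_{j ∈ J_{n,m}} c_j B_j` gives an
isomorphism of `C`-vector spaces `V_m ≅ Z_m(L) / C_m[L]`: it maps `V_m` into
`Z_m(L)`, is surjective onto `Z_m(L)` modulo `C_m[L]`, and is injective modulo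
`C_m[L]`. -/
theorem vm_iso_centralizer_quotient {F : Type} [Field F] [CharZero F]
    (d : F →+ F) (hd : IsDeriv d) (L : AddMonoid.End F) (n : ℕ) (hn : 1 ≤ n)
    (hL : MonicOrd d L n)
    (hnf : L - derOp d ^ n ∈ OpLE d (n - 2))
    (B : ℕ → AddMonoid.End F)
    (hB : ∀ j, B j ∈ OpLE d j ∧ B j - derOp d ^ j ∈ OpLE d (j - 1) ∧
      L * B j - B j * L ∈ OpLE d (n - 2))
    (m : ℕ) :
    (∀ c ∈ VmSet d L B n m,
       theta c B (Jset n m) ∈ Cent d L ∧ theta c B (Jset n m) ∈ OpLE d m) ∧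
    (∀ Q ∈ Cent d L, Q ∈ OpLE d m → ∃ c ∈ VmSet d L B n m,
       Q - theta c B (Jset n m) ∈ CPoly d L ∧ Q - theta c B (Jset n m) ∈ OpLE d m) ∧
    (∀ c ∈ VmSet d L B n m, theta c B (Jset n m) ∈ CPoly d L → ∀ j, c j = 0) := by
    classical
  have hd0 : ∃ b, d b ≠ 0 := VmAux.d_ne_zero d hn hL
  refine ⟨?_, ?_, ?_⟩
  · -- Part 1: V_m maps into Z_m(L)
    intro c hc
    exact ⟨hc.2.2, VmAux.theta_opLE d (fun j => (hB j).1) c n m⟩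
  · -- Part 2: surjectivity modulo C_m[L]
    intro Q hQc hQm
    obtain ⟨c, hcd, hcs, P, e, hed, hPe, hPm, hQeq⟩ :=
      VmAux.main_split d hd hn hL hnf hB m Q hQm (Or.inl hQc.2)
    have hthetaOp : theta c B (Jset n m) ∈ OpLE d m :=
      VmAux.theta_opLE d (fun j => (hB j).1) c n m
    have hPcomm : L * P = P * L := by
      rw [hPe]; exact VmAux.sum_L_comm d hd hL e hed m
    have hTeq : theta c B (Jset n m) = Q - P := by rw [hQeq]; abel
    have hQt : Q - theta c B (Jset n m) = P := by rw [hQeq]; abel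
    refine ⟨c, ⟨hcd, hcs, ⟨⟨m, hthetaOp⟩, ?_⟩⟩, ?_, ?_⟩
    · rw [hTeq, mul_sub, sub_mul, hQc.2, hPcomm]
    · rw [hQt, hPe]
      exact VmAux.cpoly_of d hd hed
    · rw [hQt]
      exact hPm
  · -- Part 3: injectivity modulo C_m[L]
    intro c hc hcp
    by_contra hcon
    push_neg at hcon
    obtain ⟨j₁, hj₁⟩ := hcon
    set T := theta c B (Jset n m) with hT
    have hj₁J : j₁ ∈ Jset n m := by
      by_contra h; exact hj₁ (hc.2.1 j₁ h)
    set S := (Jset n m).filter (fun j => c j ≠ 0) with hS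
    have hSne : S.Nonempty := ⟨j₁, Finset.mem_filter.mpr ⟨hj₁J, hj₁⟩⟩
    set j₀ := S.max' hSne with hj₀
    have hj₀S : j₀ ∈ S := S.max'_mem hSne
    have hj₀J : j₀ ∈ Jset n m := (Finset.mem_filter.mp hj₀S).1
    have hcj₀ : c j₀ ≠ 0 := (Finset.mem_filter.mp hj₀S).2
    have hj₀nd : ¬ n ∣ j₀ := (VmAux.jset_mem.mp hj₀J).2
    have hj₀1 : 1 ≤ j₀ := by
      rcases Nat.eq_zero_or_pos j₀ with h0 | h1
      · exact absurd (h0 ▸ dvd_zero n) hj₀nd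
      · exact h1
    have hTS : ∑ j ∈ S, mulOp (c j) * B j = T := by
      rw [hT]
      unfold theta
      refine Finset.sum_subset (Finset.filter_subset _ _) fun j hj hnj => ?_
      have hcz : c j = 0 := by
        by_contra h
        exact hnj (Finset.mem_filter.mpr ⟨hj, h⟩)
      rw [hcz, VmAux.mulOp_zero, VmAux.end_zero_mul]
    have hsplitS : T = (∑ j ∈ S.erase j₀, mulOp (c j) * B j)
        + mulOp (c j₀) * B j₀ := by
      rw [← hTS]
      exact (Finset.sum_erase_add S _ hj₀S).symm
    have h1 : T - mulOp (c j₀) * derOp d ^ j₀ ∈ OpLE d (j₀ - 1) := by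
      have e : T - mulOp (c j₀) * derOp d ^ j₀
          = (∑ j ∈ S.erase j₀, mulOp (c j) * B j)
            + mulOp (c j₀) * (B j₀ - derOp d ^ j₀) := by
        rw [hsplitS, mul_sub]; abel
      rw [e]
      refine add_mem (sum_mem fun j hj => ?_) (VmAux.mul_opLE d _ ((hB j₀).2.1))
      have hjS := Finset.mem_of_mem_erase hj
      have hne := Finset.ne_of_mem_erase hj
      have hle : j ≤ j₀ := S.le_max' j hjS
      exact VmAux.mul_opLE d _
        ((VmAux.OpLE_mono d (show j ≤ j₀ - 1 by omega)) (hB j).1)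
    obtain ⟨N, q, hqd, hqe⟩ := VmAux.cpoly_rep d hcp
    by_cases hA : ∀ i ∈ Finset.range (N+1), 1 ≤ i → q i = 0
    · -- the polynomial is constant
      have hT0 : T ∈ OpLE d 0 := by
        rw [hqe]
        refine sum_mem fun i hi => ?_
        rcases Nat.eq_zero_or_pos i with rfl | hp
        · rw [pow_zero, mul_one]; exact VmAux.mulOp_mem d _ 0
        · rw [hA i hi hp, VmAux.mulOp_zero, VmAux.end_zero_mul]; exact zero_mem _
      have hmem : mulOp (c j₀) * derOp d ^ j₀ ∈ OpLE d (j₀ - 1) := by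
        have e : mulOp (c j₀) * derOp d ^ j₀
            = T - (T - mulOp (c j₀) * derOp d ^ j₀) := by abel
        rw [e]
        exact sub_mem ((VmAux.OpLE_mono d (show 0 ≤ j₀-1 by omega)) hT0) h1
      exact hcj₀ (VmAux.single_coeff d hd hd0 hmem (by omega))
    · push_neg at hA
      obtain ⟨i₁, hi₁r, hi₁1, hqi₁⟩ := hA
      set Tp := (Finset.range (N+1)).filter (fun i => 1 ≤ i ∧ q i ≠ 0) with hTp
      have hTne : Tp.Nonempty := ⟨i₁, Finset.mem_filter.mpr ⟨hi₁r, hi₁1, hqi₁⟩⟩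
      set i₀ := Tp.max' hTne with hi₀def
      have hi₀T : i₀ ∈ Tp := Tp.max'_mem hTne
      have hi₀r : i₀ ∈ Finset.range (N+1) := (Finset.mem_filter.mp hi₀T).1
      have hi₀1 : 1 ≤ i₀ := (Finset.mem_filter.mp hi₀T).2.1
      have hqi₀ : q i₀ ≠ 0 := (Finset.mem_filter.mp hi₀T).2.2
      have hni₀1 : 1 ≤ n * i₀ := Nat.mul_pos (by omega) (by omega)
      have h2 : T - mulOp (q i₀) * derOp d ^ (n * i₀) ∈ OpLE d (n * i₀ - 1) := by
        have hsplit : T = (∑ i ∈ (Finset.range (N+1)).erase i₀, mulOp (q i) * L ^ i)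
            + mulOp (q i₀) * L ^ i₀ := by
          rw [hqe]
          exact (Finset.sum_erase_add _ _ hi₀r).symm
        have e : T - mulOp (q i₀) * derOp d ^ (n*i₀)
            = (∑ i ∈ (Finset.range (N+1)).erase i₀, mulOp (q i) * L ^ i)
              + mulOp (q i₀) * (L ^ i₀ - derOp d ^ (n*i₀)) := by
          rw [hsplit, mul_sub]; abel
        rw [e]
        refine add_mem (sum_mem fun i hi => ?_)
          (VmAux.mul_opLE d _ (VmAux.pow_monic d hd hn hL i₀ hi₀1).2)
        by_cases hqi : q i = 0
        · rw [hqi, VmAux.mulOp_zero, VmAux.end_zero_mul]; exact zero_mem _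
        · rcases Nat.eq_zero_or_pos i with rfl | hge1
          · rw [pow_zero, mul_one]; exact VmAux.mulOp_mem d _ _
          · have hiT : i ∈ Tp :=
              Finset.mem_filter.mpr ⟨Finset.mem_of_mem_erase hi, hge1, hqi⟩
            have hle : i ≤ i₀ := Tp.le_max' i hiT
            have hne : i ≠ i₀ := Finset.ne_of_mem_erase hi
            have hord : n * i ≤ n * i₀ - 1 := by
              have := Nat.mul_le_mul_left n (show i+1 ≤ i₀ by omega)
              rw [Nat.mul_succ] at this
              omega
            exact VmAux.mul_opLE d _
              ((VmAux.OpLE_mono d hord) (VmAux.pow_opLE d hd hn hL i))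
      have hne0 : j₀ ≠ n * i₀ := fun h => hj₀nd ⟨i₀, h⟩
      rcases Nat.lt_or_ge j₀ (n * i₀) with hlt | hge
      · have hmem : mulOp (q i₀) * derOp d ^ (n * i₀) ∈ OpLE d (n*i₀ - 1) := by
          have e : mulOp (q i₀) * derOp d ^ (n*i₀)
              = (T - mulOp (c j₀) * derOp d ^ j₀)
                - (T - mulOp (q i₀) * derOp d ^ (n*i₀))
                + mulOp (c j₀) * derOp d ^ j₀ := by abel
          rw [e]
          refine add_mem (sub_mem
            ((VmAux.OpLE_mono d (show j₀-1 ≤ n*i₀-1 by omega)) h1) h2) ?_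
          exact VmAux.gen_mem d _ (show j₀ ≤ n*i₀ - 1 by omega)
        exact hqi₀ (VmAux.single_coeff d hd hd0 hmem (by omega))
      · have hgt : n*i₀ < j₀ := by omega
        have hmem : mulOp (c j₀) * derOp d ^ j₀ ∈ OpLE d (j₀ - 1) := by
          have e : mulOp (c j₀) * derOp d ^ j₀
              = (T - mulOp (q i₀) * derOp d ^ (n*i₀))
                - (T - mulOp (c j₀) * derOp d ^ j₀)
                + mulOp (q i₀) * derOp d ^ (n*i₀) := by abel
          rw [e]
          refine add_mem (sub_mem
            ((VmAux.OpLE_mono d (show n*i₀-1 ≤ j₀-1 by omega)) h2) h1) ?_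
          exact VmAux.gen_mem d _ (show n*i₀ ≤ j₀ - 1 by omega)
        exact hcj₀ (VmAux.single_coeff d hd hd0 hmem (by omega))
end
end

section
/- Let L ∈ Σ[∂] be monic of order n in normal form. If for every positive integer m not divisible by n the homogeneous system hGD_{n,m}(L) has only the zero constant solution (equivalently, V_m = 0 for all such m), then the centralizer of L is trivial: Z(L) = C[L]. -/
open scoped Classical
noncomputable section

variable {R : Type} [Ring R]

section Basics
variable {d : R →+ R}

@[simp] lemma mulOp_apply (a x : R) : mulOp a x = a * x := rfl
@[simp] lemma derOp_apply (d : R →+ R) (x : R) : derOp d x = d x := rfl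

lemma mulOp_add (a b : R) : mulOp (a + b) = mulOp a + mulOp b :=
  AddMonoidHom.ext fun x => add_mul a b x

@[simp] lemma mulOp_zero : mulOp (0 : R) = 0 :=
  AddMonoidHom.ext fun x => zero_mul x

lemma mulOp_mul (a b : R) : mulOp (a * b) = mulOp a * mulOp b :=
  AddMonoidHom.ext fun x => mul_assoc a b x

@[simp] lemma mulOp_one : mulOp (1 : R) = 1 :=
  AddMonoidHom.ext fun x => one_mul x

lemma mulOp_neg (a : R) : mulOp (-a) = -(mulOp a) :=
  AddMonoidHom.ext fun x => neg_mul a x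

lemma mulOp_sub (a b : R) : mulOp (a - b) = mulOp a - mulOp b :=
  AddMonoidHom.ext fun x => sub_mul a b x

lemma mulOp_nsmul (k : ℕ) (a : R) : mulOp (k • a) = k • mulOp a :=
  AddMonoidHom.ext fun x => smul_mul_assoc k a x

lemma mul_neg_end (f g : AddMonoid.End R) : f * -g = -(f * g) := mul_neg f g
lemma neg_mul_end (f g : AddMonoid.End R) : -f * g = -(f * g) := neg_mul f g
lemma sub_mul_end (f g h : AddMonoid.End R) : (f - g) * h = f * h - g * h := sub_mul f g h
lemma mul_sub_end (f g h : AddMonoid.End R) : f * (g - h) = f * g - f * h := mul_sub f g h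

lemma der_mulOp (hd : IsDeriv d) (a : R) :
    derOp d * mulOp a = mulOp a * derOp d + mulOp (d a) := by
  refine AddMonoidHom.ext fun x => ?_
  have h : d (a * x) = d a * x + a * d x := hd a x
  show d (a * x) = a * d x + d a * x
  rw [h]; exact add_comm _ _

-- OpLE basics
lemma opLE_mono {k m : ℕ} (h : k ≤ m) : OpLE d k ≤ OpLE d m := by
  apply AddSubgroup.closure_mono
  rintro P ⟨a, i, hi, rfl⟩
  exact ⟨a, i, hi.trans h, rfl⟩

lemma gen_mem {n : ℕ} (a : R) {i : ℕ} (hi : i ≤ n) :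
    mulOp a * derOp d ^ i ∈ OpLE d n :=
  AddSubgroup.subset_closure ⟨a, i, hi, rfl⟩

lemma OpLE.induction {n : ℕ} {p : AddMonoid.End R → Prop}
    (hgen : ∀ (a : R) (i : ℕ), i ≤ n → p (mulOp a * derOp d ^ i))
    (h0 : p 0) (hadd : ∀ P Q, p P → p Q → p (P + Q))
    (hneg : ∀ P, p P → p (-P)) :
    ∀ P ∈ OpLE d n, p P := by
  intro P hP
  refine AddSubgroup.closure_induction ?_ h0 ?_ ?_ hP
  · rintro x ⟨a, i, hi, rfl⟩; exact hgen a i hi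
  · intro x y _ _ hx hy; exact hadd x y hx hy
  · intro x _ hx; exact hneg x hx

lemma der_mul_mem (hd : IsDeriv d) {k : ℕ} {P : AddMonoid.End R} (hP : P ∈ OpLE d k) :
    derOp d * P ∈ OpLE d (k + 1) := by
  refine OpLE.induction (p := fun P => derOp d * P ∈ OpLE d (k + 1)) ?_ ?_ ?_ ?_ P hP
  · intro a i hi
    rw [← mul_assoc, der_mulOp hd, add_mul, mul_assoc, ← pow_succ']
    exact AddSubgroup.add_mem _ (gen_mem a (by omega)) (gen_mem (d a) (by omega))
  · simp only [mul_zero]; exact AddSubgroup.zero_mem _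
  · intro P Q hP hQ; rw [mul_add]; exact AddSubgroup.add_mem _ hP hQ
  · intro P hP; rw [mul_neg_end]; exact AddSubgroup.neg_mem _ hP

lemma pow_der_mul_mem (hd : IsDeriv d) {k : ℕ} (j : ℕ) {P : AddMonoid.End R}
    (hP : P ∈ OpLE d k) : derOp d ^ j * P ∈ OpLE d (j + k) := by
  induction j with
  | zero => simpa using hP
  | succ j ih =>
      have h2 := der_mul_mem hd ih
      rw [← mul_assoc, ← pow_succ'] at h2
      convert h2 using 2
      omega

lemma mulOp_mul_mem {k : ℕ} (a : R) {P : AddMonoid.End R} (hP : P ∈ OpLE d k) :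
    mulOp a * P ∈ OpLE d k := by
  refine OpLE.induction (p := fun P => mulOp a * P ∈ OpLE d k) ?_ ?_ ?_ ?_ P hP
  · intro b i hi; rw [← mul_assoc, ← mulOp_mul]; exact gen_mem _ hi
  · simp only [mul_zero]; exact AddSubgroup.zero_mem _
  · intro P Q hP hQ; rw [mul_add]; exact AddSubgroup.add_mem _ hP hQ
  · intro P hP; rw [mul_neg_end]; exact AddSubgroup.neg_mem _ hP

lemma mem_mul_pow {k : ℕ} (j : ℕ) {P : AddMonoid.End R} (hP : P ∈ OpLE d k) :
    P * derOp d ^ j ∈ OpLE d (k + j) := by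
  refine OpLE.induction (p := fun P => P * derOp d ^ j ∈ OpLE d (k + j)) ?_ ?_ ?_ ?_ P hP
  · intro a i hi; rw [mul_assoc, ← pow_add]; exact gen_mem a (by omega)
  · simp only [zero_mul]; exact AddSubgroup.zero_mem _
  · intro P Q hP hQ; rw [add_mul]; exact AddSubgroup.add_mem _ hP hQ
  · intro P hP; rw [neg_mul_end]; exact AddSubgroup.neg_mem _ hP

lemma mul_mem_opLE (hd : IsDeriv d) {k l : ℕ} {P Q : AddMonoid.End R}
    (hP : P ∈ OpLE d k) (hQ : Q ∈ OpLE d l) : P * Q ∈ OpLE d (k + l) := by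
  refine OpLE.induction (p := fun P => P * Q ∈ OpLE d (k + l)) ?_ ?_ ?_ ?_ P hP
  · intro a i hi
    rw [mul_assoc]
    exact opLE_mono (by omega) (mulOp_mul_mem a (pow_der_mul_mem hd i hQ))
  · simp only [zero_mul]; exact AddSubgroup.zero_mem _
  · intro P P' hP hP'; rw [add_mul]; exact AddSubgroup.add_mem _ hP hP'
  · intro P hP; rw [neg_mul_end]; exact AddSubgroup.neg_mem _ hP

lemma rep_of_mem {k : ℕ} {P : AddMonoid.End R} (hP : P ∈ OpLE d k) :
    ∃ a : ℕ → R, P = ∑ i ∈ Finset.range (k + 1), mulOp (a i) * derOp d ^ i := by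
  refine OpLE.induction
    (p := fun P => ∃ a : ℕ → R, P = ∑ i ∈ Finset.range (k + 1), mulOp (a i) * derOp d ^ i)
    ?_ ?_ ?_ ?_ P hP
  · intro a i hi
    refine ⟨fun j => if j = i then a else 0, ?_⟩
    rw [Finset.sum_congr rfl (fun j _ => ?_), Finset.sum_ite_eq' (Finset.range (k+1)) i
      (fun j => mulOp a * derOp d ^ j)]
    · simp [Finset.mem_range, Nat.lt_succ_iff, hi]
    · split <;> simp [*]
  · exact ⟨0, by simp⟩
  · rintro P Q ⟨a, rfl⟩ ⟨b, rfl⟩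
    refine ⟨fun i => a i + b i, ?_⟩
    rw [← Finset.sum_add_distrib]
    exact Finset.sum_congr rfl fun i _ => by rw [mulOp_add, add_mul]
  · rintro P ⟨a, rfl⟩
    refine ⟨fun i => -(a i), ?_⟩
    rw [← Finset.sum_neg_distrib]
    exact Finset.sum_congr rfl fun i _ => by rw [mulOp_neg, neg_mul_end]

lemma mem_of_rep {k : ℕ} (a : ℕ → R) :
    (∑ i ∈ Finset.range (k + 1), mulOp (a i) * derOp d ^ i) ∈ OpLE d k :=
  AddSubgroup.sum_mem _ fun i hi => gen_mem _ (by simpa [Nat.lt_succ_iff] using Finset.mem_range.mp hi)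

end Basics

section Expand
variable {d : R →+ R}

lemma expandC (hd : IsDeriv d) (t : R) (i : ℕ) :
    ∃ S : AddMonoid.End R, S ∈ OpLE d (i - 2) ∧ (i ≤ 1 → S = 0) ∧
      derOp d ^ i * mulOp t =
        mulOp t * derOp d ^ i + i • (mulOp (d t) * derOp d ^ (i - 1)) + S := by
  induction i with
  | zero => exact ⟨0, AddSubgroup.zero_mem _, fun _ => rfl, by simp⟩
  | succ i ih =>
    obtain ⟨S, hS, hS1, hEq⟩ := ih
    refine ⟨i • (mulOp (d (d t)) * derOp d ^ (i - 1)) + derOp d * S, ?_, ?_, ?_⟩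
    · refine AddSubgroup.add_mem _ (AddSubgroup.nsmul_mem _ (gen_mem _ (by omega)) i) ?_
      rcases Nat.lt_or_ge i 2 with h | h
      · rw [hS1 (by omega), mul_zero]; exact AddSubgroup.zero_mem _
      · exact opLE_mono (by omega) (der_mul_mem hd hS)
    · intro h
      have hi : i = 0 := by omega
      subst hi
      rw [hS1 (by omega), mul_zero, add_zero, zero_nsmul]
    · have h1 : derOp d ^ (i + 1) * mulOp t = derOp d * (derOp d ^ i * mulOp t) := by
        rw [← mul_assoc, ← pow_succ']
      have h2 : derOp d * (mulOp t * derOp d ^ i) =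
          mulOp t * derOp d ^ (i + 1) + mulOp (d t) * derOp d ^ i := by
        rw [← mul_assoc, der_mulOp hd, add_mul, mul_assoc, ← pow_succ']
      have h3 : i • (derOp d * (mulOp (d t) * derOp d ^ (i - 1))) =
          i • (mulOp (d t) * derOp d ^ i) + i • (mulOp (d (d t)) * derOp d ^ (i - 1)) := by
        cases i with
        | zero => simp [zero_nsmul]
        | succ j =>
            have : derOp d * (mulOp (d t) * derOp d ^ (j + 1 - 1)) =
                mulOp (d t) * derOp d ^ (j + 1) + mulOp (d (d t)) * derOp d ^ (j + 1 - 1) := by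
              simp only [Nat.add_sub_cancel]
              rw [← mul_assoc, der_mulOp hd, add_mul, mul_assoc, ← pow_succ']
            rw [this]; exact nsmul_add _ _ _
      rw [h1, hEq, mul_add, mul_add, h2, mul_smul_comm, h3,
        Nat.add_sub_cancel, succ_nsmul]
      abel

lemma comm_pow_mulOp (hd : IsDeriv d) (t : R) (i : ℕ) :
    derOp d ^ i * mulOp t - mulOp t * derOp d ^ i ∈ OpLE d (i - 1) := by
  obtain ⟨S, hS, _, hEq⟩ := expandC hd t i
  rw [hEq]
  have h : mulOp t * derOp d ^ i + i • (mulOp (d t) * derOp d ^ (i - 1)) + S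
      - mulOp t * derOp d ^ i = i • (mulOp (d t) * derOp d ^ (i - 1)) + S := by abel
  rw [h]
  exact AddSubgroup.add_mem _ (AddSubgroup.nsmul_mem _ (gen_mem _ le_rfl) i)
    (opLE_mono (by omega) hS)

end Expand

section FieldPart
variable {F : Type} [Field F] [CharZero F] {d : F →+ F}

lemma mulOp_comm (a b : F) : mulOp a * mulOp b = mulOp b * mulOp a := by
  rw [← mulOp_mul, ← mulOp_mul, mul_comm]

lemma comm_drop (hd : IsDeriv d) {p q : ℕ} {P Q : AddMonoid.End F}
    (hP : P ∈ OpLE d p) (hQ : Q ∈ OpLE d q) : P * Q - Q * P ∈ OpLE d (p + q - 1) := by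
  have swap : ∀ (u v : F) (k l : ℕ), (mulOp u * derOp d ^ k) * (mulOp v * derOp d ^ l)
      = mulOp u * mulOp v * derOp d ^ (k + l)
        + mulOp u * (derOp d ^ k * mulOp v - mulOp v * derOp d ^ k) * derOp d ^ l := by
    intro u v k l
    have e1 : mulOp u * (derOp d ^ k * mulOp v - mulOp v * derOp d ^ k) * derOp d ^ l
        = mulOp u * (derOp d ^ k * mulOp v) * derOp d ^ l
          - mulOp u * (mulOp v * derOp d ^ k) * derOp d ^ l := by
      rw [mul_sub, sub_mul]
    have e2 : mulOp u * mulOp v * derOp d ^ (k + l)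
        = mulOp u * (mulOp v * derOp d ^ k) * derOp d ^ l := by
      rw [pow_add]; noncomm_ring
    have e3 : mulOp u * derOp d ^ k * (mulOp v * derOp d ^ l)
        = mulOp u * (derOp d ^ k * mulOp v) * derOp d ^ l := by noncomm_ring
    rw [e1, e2, e3]; abel
  have hgen : ∀ (a : F) (i : ℕ), i ≤ p → ∀ (b : F) (j : ℕ), j ≤ q →
      (mulOp a * derOp d ^ i) * (mulOp b * derOp d ^ j)
        - (mulOp b * derOp d ^ j) * (mulOp a * derOp d ^ i) ∈ OpLE d (p + q - 1) := by
    intro a i hi b j hj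
    have key : (mulOp a * derOp d ^ i) * (mulOp b * derOp d ^ j)
        - (mulOp b * derOp d ^ j) * (mulOp a * derOp d ^ i)
        = mulOp a * (derOp d ^ i * mulOp b - mulOp b * derOp d ^ i) * derOp d ^ j
          - mulOp b * (derOp d ^ j * mulOp a - mulOp a * derOp d ^ j) * derOp d ^ i := by
      rw [swap a b i j, swap b a j i, mulOp_comm b a, Nat.add_comm j i]
      abel
    rw [key]
    refine AddSubgroup.sub_mem _ ?_ ?_
    · rcases Nat.eq_zero_or_pos i with hi0 | hi0
      · subst hi0
        simpa using AddSubgroup.zero_mem (OpLE d (p + q - 1))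
      · exact opLE_mono (by omega)
          (mem_mul_pow j (mulOp_mul_mem a (comm_pow_mulOp hd b i)))
    · rcases Nat.eq_zero_or_pos j with hj0 | hj0
      · subst hj0
        simpa using AddSubgroup.zero_mem (OpLE d (p + q - 1))
      · exact opLE_mono (by omega)
          (mem_mul_pow i (mulOp_mul_mem b (comm_pow_mulOp hd a j)))
  refine OpLE.induction (p := fun P => P * Q - Q * P ∈ OpLE d (p + q - 1)) ?_ ?_ ?_ ?_ P hP
  · intro a i hi
    refine OpLE.induction (p := fun Q => (mulOp a * derOp d ^ i) * Q
      - Q * (mulOp a * derOp d ^ i) ∈ OpLE d (p + q - 1)) ?_ ?_ ?_ ?_ Q hQ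
    · intro b j hj; exact hgen a i hi b j hj
    · simp only [mul_zero, zero_mul, sub_zero]
      exact AddSubgroup.zero_mem _
    · intro Q1 Q2 h1 h2
      simp only [mul_add, add_mul]
      have e : ∀ x1 x2 y1 y2 : AddMonoid.End F, (x1 + x2) - (y1 + y2) = (x1 - y1) + (x2 - y2) :=
        fun _ _ _ _ => by abel
      rw [e]
      exact AddSubgroup.add_mem _ h1 h2
    · intro Q1 h1
      simp only [mul_neg_end, neg_mul_end]
      have e : ∀ x y : AddMonoid.End F, -x - -y = -(x - y) := fun _ _ => by abel
      rw [e]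
      exact AddSubgroup.neg_mem _ h1
  · simp only [mul_zero, zero_mul, sub_zero]
    exact AddSubgroup.zero_mem _
  · intro P1 P2 h1 h2
    simp only [mul_add, add_mul]
    have e : ∀ x1 x2 y1 y2 : AddMonoid.End F, (x1 + x2) - (y1 + y2) = (x1 - y1) + (x2 - y2) :=
      fun _ _ _ _ => by abel
    rw [e]
    exact AddSubgroup.add_mem _ h1 h2
  · intro P1 h1
    simp only [mul_neg_end, neg_mul_end]
    have e : ∀ x y : AddMonoid.End F, -x - -y = -(x - y) := fun _ _ => by abel
    rw [e]
    exact AddSubgroup.neg_mem _ h1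

lemma pow_der_mulOp_const (hd : IsDeriv d) {c : F} (hc : d c = 0) (i : ℕ) :
    derOp d ^ i * mulOp c = mulOp c * derOp d ^ i := by
  induction i with
  | zero => rw [pow_zero, one_mul, mul_one]
  | succ i ih =>
      rw [pow_succ', mul_assoc, ih, ← mul_assoc, der_mulOp hd, hc, mulOp_zero, add_zero,
        mul_assoc, ← pow_succ']

lemma const_comm (hd : IsDeriv d) {c : F} (hc : d c = 0) {k : ℕ} {P : AddMonoid.End F}
    (hP : P ∈ OpLE d k) : mulOp c * P = P * mulOp c := by
  refine OpLE.induction (p := fun P => mulOp c * P = P * mulOp c) ?_ ?_ ?_ ?_ P hP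
  · intro a i _
    rw [mul_assoc, pow_der_mulOp_const hd hc, ← mul_assoc, ← mul_assoc, ← mulOp_mul,
      ← mulOp_mul, mul_comm]
  · simp only [mul_zero, zero_mul]
  · intro P Q h1 h2; simp only [mul_add, add_mul, h1, h2]
  · intro P h1; simp only [mul_neg_end, neg_mul_end, h1]

lemma top_coeff_zero (hd : IsDeriv d) {t : F} (ht : d t ≠ 0) :
    ∀ (m : ℕ) (a : ℕ → F),
      (∑ i ∈ Finset.range (m + 1), mulOp (a i) * derOp d ^ i) = 0 → a m = 0 := by
  intro m
  induction m with
  | zero =>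
      intro a h
      rw [Finset.sum_range_one, pow_zero, mul_one] at h
      have := congrArg (fun f : AddMonoid.End F => f 1) h
      simpa using this
  | succ m ih =>
      intro a hP
      choose S hSmem hS1 hSeq using expandC hd t
      have hterm : ∀ i, (mulOp (a i) * derOp d ^ i) * mulOp t - mulOp t * (mulOp (a i) * derOp d ^ i)
          = i • (mulOp (a i * d t) * derOp d ^ (i - 1)) + mulOp (a i) * S i := by
        intro i
        have e1 : mulOp t * (mulOp (a i) * derOp d ^ i) = mulOp (a i * t) * derOp d ^ i := by
          rw [← mul_assoc, ← mulOp_mul, mul_comm t (a i)]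
        have e2 : mulOp (a i) * (mulOp (d t) * derOp d ^ (i - 1))
            = mulOp (a i * d t) * derOp d ^ (i - 1) := by
          rw [← mul_assoc, ← mulOp_mul]
        rw [mul_assoc, hSeq i, mul_add, mul_add, mul_smul_comm, e2, ← mul_assoc, ← mulOp_mul, e1]
        abel
      have hsum : ∑ i ∈ Finset.range (m + 2),
          (i • (mulOp (a i * d t) * derOp d ^ (i - 1)) + mulOp (a i) * S i) = 0 := by
        rw [← Finset.sum_congr rfl (fun i _ => hterm i), Finset.sum_sub_distrib,
          ← Finset.sum_mul, ← Finset.mul_sum, hP, zero_mul, mul_zero, sub_self]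
      rw [Finset.sum_add_distrib] at hsum
      set W : AddMonoid.End F := ∑ i ∈ Finset.range (m + 2), mulOp (a i) * S i with hW
      have hWmem : W ∈ OpLE d (m - 1) := by
        refine AddSubgroup.sum_mem _ fun i hi => ?_
        rcases Nat.lt_or_ge i 2 with h2 | h2
        · rw [hS1 i (by omega), mul_zero]; exact AddSubgroup.zero_mem _
        · exact opLE_mono (by simp only [Finset.mem_range] at hi; omega)
            (mulOp_mul_mem _ (hSmem i))
      obtain ⟨w, hw⟩ : ∃ w : ℕ → F, W = ∑ i ∈ Finset.range m, mulOp (w i) * derOp d ^ i := by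
        cases m with
        | zero =>
            refine ⟨0, ?_⟩
            rw [Finset.range_zero, Finset.sum_empty, hW]
            rw [Finset.sum_range_succ, Finset.sum_range_one, hS1 0 (by omega),
              hS1 1 (by omega), mul_zero, mul_zero, add_zero]
        | succ m' => exact rep_of_mem hWmem
      have hreindex : ∑ i ∈ Finset.range (m + 2), i • (mulOp (a i * d t) * derOp d ^ (i - 1))
          = ∑ i ∈ Finset.range (m + 1), (i + 1) • (mulOp (a (i + 1) * d t) * derOp d ^ i) := by
        rw [Finset.sum_range_succ' (fun i => i • (mulOp (a i * d t) * derOp d ^ (i - 1))) (m + 1)]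
        simp only [zero_nsmul, add_zero, Nat.add_sub_cancel]
      set b : ℕ → F := fun i => (i + 1) • (a (i + 1) * d t) + (if i < m then w i else 0) with hb
      have hbsum : ∑ i ∈ Finset.range (m + 1), mulOp (b i) * derOp d ^ i = 0 := by
        have h1 : ∀ i, mulOp (b i) * derOp d ^ i
            = (i + 1) • (mulOp (a (i + 1) * d t) * derOp d ^ i)
              + mulOp (if i < m then w i else 0) * derOp d ^ i := by
          intro i
          rw [hb]
          simp only
          rw [mulOp_add, add_mul, mulOp_nsmul, smul_mul_assoc]
        rw [Finset.sum_congr rfl (fun i _ => h1 i), Finset.sum_add_distrib]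
        have h2 : ∑ i ∈ Finset.range (m + 1), mulOp (if i < m then w i else 0) * derOp d ^ i
            = W := by
          have e0 : ∀ i ∈ Finset.range m, mulOp (w i) * derOp d ^ i
              = mulOp (if i < m then w i else 0) * derOp d ^ i := by
            intro i hi
            rw [if_pos (Finset.mem_range.mp hi)]
          rw [hw, Finset.sum_congr rfl e0]
          exact (Finset.sum_subset (Finset.range_subset_range.mpr (Nat.le_succ m))
            (fun i hi hni => by
              have hnm : ¬ i < m := by simpa using hni
              rw [if_neg hnm, mulOp_zero, zero_mul])).symm
        rw [h2, ← hreindex]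
        exact hsum
      have hbm : b m = 0 := ih b hbsum
      have h3 : (m + 1) • (a (m + 1) * d t) = 0 := by
        rw [hb] at hbm
        simp only at hbm
        rw [if_neg (lt_irrefl m), add_zero] at hbm
        exact hbm
      have h4 : a (m + 1) * d t = 0 := by
        have hcast : ((m + 1 : ℕ) : F) ≠ 0 := Nat.cast_ne_zero.mpr (Nat.succ_ne_zero m)
        rw [nsmul_eq_mul] at h3
        exact (mul_eq_zero.mp h3).resolve_left hcast
      exact (mul_eq_zero.mp h4).resolve_right ht

lemma coef_zero (hd : IsDeriv d) {t : F} (ht : d t ≠ 0) {c : F} {K k : ℕ} (hk : k < K)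
    (h : mulOp c * derOp d ^ K ∈ OpLE d k) : c = 0 := by
  obtain ⟨bb, hbb⟩ := rep_of_mem h
  set e : ℕ → F := fun i => (if i = K then c else 0) - (if i < k + 1 then bb i else 0) with he
  have hsum : ∑ i ∈ Finset.range (K + 1), mulOp (e i) * derOp d ^ i = 0 := by
    have h1 : ∀ i, mulOp (e i) * derOp d ^ i
        = mulOp (if i = K then c else 0) * derOp d ^ i
          - mulOp (if i < k + 1 then bb i else 0) * derOp d ^ i := by
      intro i; rw [he]; simp only; rw [mulOp_sub, sub_mul]
    rw [Finset.sum_congr rfl (fun i _ => h1 i), Finset.sum_sub_distrib]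
    have h2 : ∑ i ∈ Finset.range (K + 1), mulOp (if i = K then c else 0) * derOp d ^ i
        = mulOp c * derOp d ^ K := by
      have h2a : ∀ i ∈ Finset.range (K + 1), mulOp (if i = K then c else 0) * derOp d ^ i
          = if i = K then mulOp c * derOp d ^ i else 0 := by
        intro i _; split <;> simp [*]
      rw [Finset.sum_congr rfl h2a, Finset.sum_ite_eq' (Finset.range (K + 1)) K
        (fun i => mulOp c * derOp d ^ i), if_pos (Finset.mem_range.mpr (by omega))]
    have h3 : ∑ i ∈ Finset.range (K + 1), mulOp (if i < k + 1 then bb i else 0) * derOp d ^ i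
        = ∑ i ∈ Finset.range (k + 1), mulOp (bb i) * derOp d ^ i := by
      have e0 : ∀ i ∈ Finset.range (k + 1), mulOp (bb i) * derOp d ^ i
          = mulOp (if i < k + 1 then bb i else 0) * derOp d ^ i := by
        intro i hi; rw [if_pos (Finset.mem_range.mp hi)]
      rw [Finset.sum_congr rfl e0]
      exact (Finset.sum_subset (Finset.range_subset_range.mpr (by omega))
        (fun i hi hni => by
          have hni' : ¬ i < k + 1 := by simpa using hni
          rw [if_neg hni', mulOp_zero, zero_mul])).symm
    rw [h2, h3, ← hbb, sub_self]
  have hfin := top_coeff_zero hd ht K e hsum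
  rw [he] at hfin; simp only at hfin
  have hKk : ¬ K < k + 1 := by omega
  simp [hKk] at hfin
  exact hfin

lemma const_of_comm (hd : IsDeriv d) {t : F} (ht : d t ≠ 0) {n : ℕ} (hn : 1 ≤ n)
    {L : AddMonoid.End F} (hnf : L - derOp d ^ n ∈ OpLE d (n - 2)) (m : ℕ) (hnm : 2 ≤ n + m)
    (a : ℕ → F)
    (hcomm : L * (∑ i ∈ Finset.range (m + 1), mulOp (a i) * derOp d ^ i)
      - (∑ i ∈ Finset.range (m + 1), mulOp (a i) * derOp d ^ i) * L ∈ OpLE d (n + m - 2)) :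
    d (a m) = 0 := by
  set P : AddMonoid.End F := ∑ i ∈ Finset.range (m + 1), mulOp (a i) * derOp d ^ i with hPdef
  choose S hSmem hS1 hSeq using fun i => expandC hd (a i) n
  have claim1 : derOp d ^ n * P - P * derOp d ^ n
      = ∑ i ∈ Finset.range (m + 1),
          (n • (mulOp (d (a i)) * derOp d ^ (n - 1 + i)) + S i * derOp d ^ i) := by
    rw [hPdef, Finset.mul_sum, Finset.sum_mul, ← Finset.sum_sub_distrib]
    refine Finset.sum_congr rfl fun i _ => ?_
    have e1 : derOp d ^ n * (mulOp (a i) * derOp d ^ i)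
        = (derOp d ^ n * mulOp (a i)) * derOp d ^ i := by rw [mul_assoc]
    have e2 : (mulOp (a i) * derOp d ^ i) * derOp d ^ n
        = (mulOp (a i) * derOp d ^ n) * derOp d ^ i := by
      rw [mul_assoc, mul_assoc, ← pow_add, ← pow_add, Nat.add_comm]
    rw [e1, hSeq i, e2, add_mul, add_mul, smul_mul_assoc, mul_assoc (mulOp (d (a i))),
      ← pow_add]
    abel
  have hE : (L - derOp d ^ n) * P - P * (L - derOp d ^ n) ∈ OpLE d (n + m - 2) := by
    refine opLE_mono (show (n - 2) + (m) - 1 ≤ n + m - 2 by omega) ?_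
    exact comm_drop hd hnf (hPdef ▸ mem_of_rep a)
  have hlow : (∑ i ∈ Finset.range m,
      (n • (mulOp (d (a i)) * derOp d ^ (n - 1 + i)) + S i * derOp d ^ i)) ∈
        OpLE d (n + m - 2) := by
    refine AddSubgroup.sum_mem _ fun i hi => ?_
    have him : i < m := Finset.mem_range.mp hi
    refine AddSubgroup.add_mem _
      (AddSubgroup.nsmul_mem _ (gen_mem _ (by omega)) n) ?_
    rcases Nat.lt_or_ge n 2 with h2 | h2
    · rw [hS1 i (by omega), zero_mul]; exact AddSubgroup.zero_mem _
    · exact opLE_mono (by omega) (mem_mul_pow i (hSmem i))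
  have hSm : S m * derOp d ^ m ∈ OpLE d (n + m - 2) := by
    rcases Nat.lt_or_ge n 2 with h2 | h2
    · rw [hS1 m (by omega), zero_mul]; exact AddSubgroup.zero_mem _
    · exact opLE_mono (by omega) (mem_mul_pow m (hSmem m))
  have heq : n • (mulOp (d (a m)) * derOp d ^ (n - 1 + m))
      = (L * P - P * L) - ((L - derOp d ^ n) * P - P * (L - derOp d ^ n))
        - (∑ i ∈ Finset.range m,
            (n • (mulOp (d (a i)) * derOp d ^ (n - 1 + i)) + S i * derOp d ^ i))
        - S m * derOp d ^ m := by
    have hsplit : L * P - P * L = (derOp d ^ n * P - P * derOp d ^ n)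
        + ((L - derOp d ^ n) * P - P * (L - derOp d ^ n)) := by
      rw [sub_mul_end, mul_sub_end]
      abel
    rw [hsplit, claim1, Finset.sum_range_succ]
    abel
  have key : n • (mulOp (d (a m)) * derOp d ^ (n - 1 + m)) ∈ OpLE d (n + m - 2) := by
    rw [heq]
    exact AddSubgroup.sub_mem _ (AddSubgroup.sub_mem _ (AddSubgroup.sub_mem _ hcomm hE) hlow) hSm
  have key2 : mulOp ((n : F) * d (a m)) * derOp d ^ (n - 1 + m) ∈ OpLE d (n + m - 2) := by
    have e : n • (mulOp (d (a m)) * derOp d ^ (n - 1 + m))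
        = mulOp ((n : F) * d (a m)) * derOp d ^ (n - 1 + m) := by
      rw [← smul_mul_assoc, ← mulOp_nsmul, nsmul_eq_mul]
    rw [← e]; exact key
  have hc := coef_zero hd ht (show n + m - 2 < n - 1 + m by omega) key2
  have hcast : ((n : ℕ) : F) ≠ 0 := Nat.cast_ne_zero.mpr (by omega)
  exact (mul_eq_zero.mp hc).resolve_left hcast

section MainPart
variable {F : Type} [Field F] [CharZero F] {d : F →+ F}

lemma Lpow_mem (hd : IsDeriv d) {L : AddMonoid.End F} {n : ℕ} (hLn : L ∈ OpLE d n) (q : ℕ) :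
    L ^ q ∈ OpLE d (n * q) := by
  induction q with
  | zero =>
      rw [pow_zero, Nat.mul_zero]
      simpa using gen_mem (d := d) (1 : F) (i := 0) le_rfl
  | succ q ih =>
      rw [pow_succ, Nat.mul_succ]
      exact mul_mem_opLE hd ih hLn

lemma Lpow_monic (hd : IsDeriv d) {L : AddMonoid.End F} {n : ℕ} (hn : 1 ≤ n)
    (hLn : L ∈ OpLE d n)
    (hmon : L - derOp d ^ n ∈ OpLE d (n - 1)) (q : ℕ) :
    L ^ q - derOp d ^ (n * q) ∈ OpLE d (n * q - 1) := by
  induction q with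
  | zero =>
      rw [pow_zero, Nat.mul_zero, pow_zero, sub_self]
      exact AddSubgroup.zero_mem _
  | succ q ih =>
      rcases Nat.eq_zero_or_pos q with hq0 | hq0
      · subst hq0
        rw [pow_one, Nat.mul_one]
        exact hmon
      · have key : L ^ (q + 1) - derOp d ^ (n * (q + 1))
            = (L ^ q - derOp d ^ (n * q)) * L + derOp d ^ (n * q) * (L - derOp d ^ n) := by
          rw [sub_mul_end, mul_sub_end, pow_succ, Nat.mul_succ, pow_add]
          abel
        rw [key]
        have hms : n * (q + 1) = n * q + n := Nat.mul_succ n q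
        have hnq : 1 ≤ n * q := Nat.mul_pos (by omega) hq0
        exact AddSubgroup.add_mem _ (opLE_mono (by omega) (mul_mem_opLE hd ih hLn))
          (opLE_mono (by omega) (pow_der_mul_mem hd (n * q) hmon))

lemma cpoly_iff {L P : AddMonoid.End F} :
    P ∈ CPoly d L ↔ ∃ (M : ℕ) (aa : ℕ → F), (∀ k, d (aa k) = 0) ∧
      P = ∑ i ∈ Finset.range M, mulOp (aa i) * L ^ i := by
  constructor
  · rintro ⟨p, hp, rfl⟩
    exact ⟨p.natDegree + 1, p.coeff, hp, rfl⟩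
  · rintro ⟨M, aa, haa, rfl⟩
    set p : Polynomial F := ∑ i ∈ Finset.range M, Polynomial.monomial i (aa i) with hp
    have hco : ∀ k, p.coeff k = if k < M then aa k else 0 := by
      intro k
      rw [hp, Polynomial.finset_sum_coeff]
      have h1 : ∀ i ∈ Finset.range M, (Polynomial.monomial i (aa i)).coeff k
          = if i = k then aa i else 0 := fun i _ => Polynomial.coeff_monomial
      rw [Finset.sum_congr rfl h1, Finset.sum_ite_eq' (Finset.range M) k aa]
      simp [Finset.mem_range]
    refine ⟨p, ?_, ?_⟩
    · intro k; rw [hco k]; split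
      · exact haa k
      · exact map_zero d
    · set T := max (p.natDegree + 1) M with hT
      have e1 : ∑ i ∈ Finset.range (p.natDegree + 1), mulOp (p.coeff i) * L ^ i
          = ∑ i ∈ Finset.range T, mulOp (p.coeff i) * L ^ i := by
        refine Finset.sum_subset (Finset.range_subset_range.mpr (le_max_left _ _)) ?_
        intro i _ hni
        have hlt : p.natDegree < i := by simp only [Finset.mem_range] at hni; omega
        rw [Polynomial.coeff_eq_zero_of_natDegree_lt hlt, mulOp_zero, zero_mul]
      have e2 : ∑ i ∈ Finset.range M, mulOp (aa i) * L ^ i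
          = ∑ i ∈ Finset.range T, mulOp (p.coeff i) * L ^ i := by
        have h2 : ∀ i ∈ Finset.range M, mulOp (aa i) * L ^ i = mulOp (p.coeff i) * L ^ i := by
          intro i hi
          rw [hco i, if_pos (Finset.mem_range.mp hi)]
        rw [Finset.sum_congr rfl h2]
        refine Finset.sum_subset (Finset.range_subset_range.mpr (le_max_right _ _)) ?_
        intro i _ hni
        have hlt : ¬ i < M := by simp only [Finset.mem_range] at hni; omega
        rw [hco i, if_neg hlt, mulOp_zero, zero_mul]
      rw [e2, ← e1]

lemma cpoly_add_term {L P : AddMonoid.End F} {c : F} {q : ℕ}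
    (hP : P ∈ CPoly d L) (hc : d c = 0) : P + mulOp c * L ^ q ∈ CPoly d L := by
  rw [cpoly_iff] at hP ⊢
  obtain ⟨M, aa, haa, rfl⟩ := hP
  refine ⟨max M (q + 1), fun i => (if i < M then aa i else 0) + (if i = q then c else 0), ?_, ?_⟩
  · intro k
    have h1 : d (if k < M then aa k else 0) = 0 := by split; exacts [haa k, map_zero d]
    have h2 : d (if k = q then c else 0) = 0 := by split; exacts [hc, map_zero d]
    rw [map_add, h1, h2, add_zero]
  · have h3 : ∀ i, mulOp ((if i < M then aa i else 0) + (if i = q then c else 0)) * L ^ i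
        = mulOp (if i < M then aa i else 0) * L ^ i
          + mulOp (if i = q then c else 0) * L ^ i := by
      intro i; rw [mulOp_add, add_mul]
    rw [Finset.sum_congr rfl (fun i _ => h3 i), Finset.sum_add_distrib]
    congr 1
    · have h2 : ∀ i ∈ Finset.range M, mulOp (aa i) * L ^ i
          = mulOp (if i < M then aa i else 0) * L ^ i := by
        intro i hi
        rw [if_pos (Finset.mem_range.mp hi)]
      rw [Finset.sum_congr rfl h2]
      refine Finset.sum_subset (Finset.range_subset_range.mpr (le_max_left _ _)) ?_
      intro i _ hni
      have hlt : ¬ i < M := by simp only [Finset.mem_range] at hni; omega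
      rw [if_neg hlt, mulOp_zero, zero_mul]
    · have h4 : ∀ i ∈ Finset.range (max M (q + 1)),
          mulOp (if i = q then c else 0) * L ^ i
            = if i = q then mulOp c * L ^ i else 0 := by
        intro i _
        split
        · rfl
        · rw [mulOp_zero, zero_mul]
      rw [Finset.sum_congr rfl h4, Finset.sum_ite_eq' (Finset.range (max M (q + 1))) q
        (fun i => mulOp c * L ^ i), if_pos (Finset.mem_range.mpr (by omega))]

lemma exists_nonconst (hd : IsDeriv d) {L : AddMonoid.End F} {n : ℕ} (hn : 1 ≤ n)
    (hord : HasOrd d L n) : ∃ t, d t ≠ 0 := by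
  by_contra h
  push_neg at h
  have hder : derOp d = 0 := AddMonoidHom.ext fun x => h x
  obtain ⟨a, ha⟩ := rep_of_mem hord.1
  have hL0 : L ∈ OpLE d 0 := by
    rw [ha]
    refine AddSubgroup.sum_mem _ fun i _ => ?_
    cases i with
    | zero => exact gen_mem _ le_rfl
    | succ i =>
        rw [hder, zero_pow (Nat.succ_ne_zero i), mul_zero]
        exact AddSubgroup.zero_mem _
  have := hord.2 0 hL0
  omega

end MainPart

lemma main_ind (hd : IsDeriv d) {t : F} (ht : d t ≠ 0) {L : AddMonoid.End F} {n : ℕ}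
    (hn : 1 ≤ n) (hLn : L ∈ OpLE d n)
    (hnf : L - derOp d ^ n ∈ OpLE d (n - 2))
    (B : ℕ → AddMonoid.End F)
    (hB : ∀ j, B j ∈ OpLE d j ∧ B j - derOp d ^ j ∈ OpLE d (j - 1) ∧
      L * B j - B j * L ∈ OpLE d (n - 2))
    (hV : ∀ m : ℕ, 0 < m → ¬ (n ∣ m) → ∀ c ∈ VmSet d L B n m, ∀ j, c j = 0) :
    ∀ N (A : AddMonoid.End F), A ∈ OpLE d N → L * A = A * L → A ∈ CPoly d L := by
  have hmon : L - derOp d ^ n ∈ OpLE d (n - 1) := opLE_mono (by omega) hnf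
  set Bb : ℕ → AddMonoid.End F := fun j => if n ∣ j then L ^ (j / n) else B j with hBb
  have hBb1 : ∀ j, Bb j ∈ OpLE d j := by
    intro j; rw [hBb]; simp only
    split
    · rename_i hdvd
      have hj : n * (j / n) = j := Nat.mul_div_cancel' hdvd
      have h2 := Lpow_mem hd hLn (j / n)
      rwa [hj] at h2
    · exact (hB j).1
  have hBb2 : ∀ j, Bb j - derOp d ^ j ∈ OpLE d (j - 1) := by
    intro j; rw [hBb]; simp only
    split
    · rename_i hdvd
      have hj : n * (j / n) = j := Nat.mul_div_cancel' hdvd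
      have h2 := Lpow_monic hd hn hLn hmon (j / n)
      rwa [hj] at h2
    · exact (hB j).2.1
  have hBb3 : ∀ j, L * Bb j - Bb j * L ∈ OpLE d (n - 2) := by
    intro j; rw [hBb]; simp only
    split
    · have e : L * L ^ (j / n) - L ^ (j / n) * L = 0 := by
        rw [← pow_succ', ← pow_succ, sub_self]
      rw [e]; exact AddSubgroup.zero_mem _
    · exact (hB j).2.2
  have hconstL : ∀ (c : F), d c = 0 → ∀ e : ℕ,
      L * (mulOp c * L ^ e) = (mulOp c * L ^ e) * L := by
    intro c hc e
    have h1 : L * mulOp c = mulOp c * L := (const_comm hd hc hLn).symm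
    calc L * (mulOp c * L ^ e) = (L * mulOp c) * L ^ e := (mul_assoc _ _ _).symm
      _ = (mulOp c * L) * L ^ e := by rw [h1]
      _ = mulOp c * (L * L ^ e) := mul_assoc _ _ _
      _ = mulOp c * (L ^ e * L) := by rw [← pow_succ', pow_succ]
      _ = (mulOp c * L ^ e) * L := (mul_assoc _ _ _).symm
  have peel : 2 ≤ n → ∀ k, ∀ A' : AddMonoid.End F, A' ∈ OpLE d k →
      L * A' - A' * L ∈ OpLE d (n - 2) →
      ∃ c : ℕ → F, (∀ j, d (c j) = 0) ∧
        A' = ∑ j ∈ Finset.range (k + 1), mulOp (c j) * Bb j := by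
    intro hn2 k
    induction k with
    | zero =>
        intro A' hA' hcm
        obtain ⟨a, ha⟩ := rep_of_mem hA'
        have ha0 : A' = mulOp (a 0) := by
          rw [ha, Finset.sum_range_one, pow_zero, mul_one]
        have hda : d (a 0) = 0 :=
          const_of_comm hd ht hn hnf 0 (by omega) a
            (by rw [← ha]; exact opLE_mono (by omega) hcm)
        refine ⟨fun _ => a 0, fun _ => hda, ?_⟩
        rw [Finset.sum_range_one, ha0]
        have hb0 : Bb 0 = 1 := by
          rw [hBb]; simp only
          rw [if_pos (dvd_zero n), Nat.zero_div, pow_zero]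
        rw [hb0, mul_one]
    | succ k ihp =>
        intro A' hA' hcm
        obtain ⟨a, ha⟩ := rep_of_mem hA'
        have hda : d (a (k + 1)) = 0 :=
          const_of_comm hd ht hn hnf (k + 1) (by omega) a
            (by rw [← ha]; exact opLE_mono (by omega) hcm)
        set A'' := A' - mulOp (a (k + 1)) * Bb (k + 1) with hA''
        have hA''mem : A'' ∈ OpLE d k := by
          have e : A'' = (∑ i ∈ Finset.range (k + 1), mulOp (a i) * derOp d ^ i)
              - mulOp (a (k + 1)) * (Bb (k + 1) - derOp d ^ (k + 1)) := by
            rw [hA'', ha, Finset.sum_range_succ, mul_sub_end]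
            abel
          rw [e]
          refine AddSubgroup.sub_mem _ (mem_of_rep a) ?_
          have h2 := mulOp_mul_mem (a (k + 1)) (hBb2 (k + 1))
          rwa [Nat.add_sub_cancel] at h2
        have hA''cm : L * A'' - A'' * L ∈ OpLE d (n - 2) := by
          have e : L * A'' - A'' * L = (L * A' - A' * L)
              - mulOp (a (k + 1)) * (L * Bb (k + 1) - Bb (k + 1) * L) := by
            rw [hA'', mul_sub_end, mul_sub_end, sub_mul_end, ← mul_assoc,
              ← const_comm hd hda hLn, mul_assoc (mulOp (a (k + 1))) L (Bb (k + 1)),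
              mul_assoc (mulOp (a (k + 1))) (Bb (k + 1)) L]
            abel
          rw [e]
          exact AddSubgroup.sub_mem _ hcm (mulOp_mul_mem _ (hBb3 (k + 1)))
        obtain ⟨c, hcc, hcs⟩ := ihp A'' hA''mem hA''cm
        refine ⟨Function.update c (k + 1) (a (k + 1)), ?_, ?_⟩
        · intro j
          rcases eq_or_ne j (k + 1) with rfl | hne
          · rw [Function.update_self]; exact hda
          · rw [Function.update_of_ne hne]; exact hcc j
        · rw [Finset.sum_range_succ]
          have h1 : ∀ j ∈ Finset.range (k + 1),
              mulOp (Function.update c (k + 1) (a (k + 1)) j) * Bb j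
                = mulOp (c j) * Bb j := by
            intro j hj
            rw [Function.update_of_ne (by simp only [Finset.mem_range] at hj; omega)]
          rw [Finset.sum_congr rfl h1, ← hcs, Function.update_self, hA'']
          abel
  intro N
  induction N using Nat.strong_induction_on with
  | _ N ih =>
    intro A hAN hAc
    obtain ⟨a, ha⟩ := rep_of_mem hAN
    have hAcomm0 : L * A - A * L = 0 := by rw [hAc, sub_self]
    rcases Nat.eq_zero_or_pos N with hN0 | hN0
    · subst hN0
      have hA0 : A = mulOp (a 0) := by rw [ha, Finset.sum_range_one, pow_zero, mul_one]
      have hda : d (a 0) = 0 := by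
        rcases Nat.lt_or_ge n 2 with h2 | h2
        · have hn1 : n = 1 := by omega
          subst hn1
          obtain ⟨ee, he⟩ := rep_of_mem hnf
          have hE : L - derOp d ^ 1 = mulOp (ee 0) := by
            rw [he, show (1 : ℕ) - 2 = 0 from rfl, Finset.sum_range_one, pow_zero, mul_one]
          have hLe : L = derOp d + mulOp (ee 0) := by
            rw [pow_one] at hE
            have h3 := sub_eq_iff_eq_add.mp hE
            rw [h3, add_comm]
          have hz : mulOp (d (a 0)) = 0 := by
            have h0 : L * mulOp (a 0) - mulOp (a 0) * L = mulOp (d (a 0)) := by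
              rw [hLe, add_mul, mul_add, der_mulOp hd, ← mulOp_mul, ← mulOp_mul,
                mul_comm (ee 0) (a 0)]
              abel
            rw [← h0, ← hA0, hAcomm0]
          have h4 := congrArg (fun f : AddMonoid.End F => f 1) hz
          simpa using h4
        · exact const_of_comm hd ht hn hnf 0 (by omega) a
            (by rw [← ha, hAcomm0]; exact AddSubgroup.zero_mem _)
      rw [cpoly_iff]
      exact ⟨1, fun _ => a 0, fun _ => hda,
        by rw [Finset.sum_range_one, pow_zero, mul_one, hA0]⟩
    · rcases eq_or_ne (a N) 0 with haN | haN
      · have hAmem : A ∈ OpLE d (N - 1) := by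
          have e : A = ∑ i ∈ Finset.range N, mulOp (a i) * derOp d ^ i := by
            rw [ha, Finset.sum_range_succ, haN, mulOp_zero, zero_mul, add_zero]
          rw [e]
          have h2 := mem_of_rep (d := d) (k := N - 1) a
          rwa [show N - 1 + 1 = N by omega] at h2
        exact ih (N - 1) (by omega) A hAmem hAc
      · have hda : d (a N) = 0 :=
          const_of_comm hd ht hn hnf N (by omega) a
            (by rw [← ha, hAcomm0]; exact AddSubgroup.zero_mem _)
        by_cases hdvd : n ∣ N
        · set q := N / n with hq
          have hNq : n * q = N := Nat.mul_div_cancel' hdvd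
          set A' := A - mulOp (a N) * L ^ q with hA'
          have hA'mem : A' ∈ OpLE d (N - 1) := by
            have e : A' = (∑ i ∈ Finset.range N, mulOp (a i) * derOp d ^ i)
                - mulOp (a N) * (L ^ q - derOp d ^ N) := by
              rw [hA', ha, Finset.sum_range_succ, mul_sub_end]
              abel
            rw [e]
            refine AddSubgroup.sub_mem _ ?_ ?_
            · have h2 := mem_of_rep (d := d) (k := N - 1) a
              rwa [show N - 1 + 1 = N by omega] at h2
            · have h2 := mulOp_mul_mem (a N) (Lpow_monic hd hn hLn hmon q)
              rwa [hNq] at h2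
          have hA'c : L * A' = A' * L := by
            rw [hA', mul_sub_end, sub_mul_end, hAc, hconstL (a N) hda q]
          have hrec := ih (N - 1) (by omega) A' hA'mem hA'c
          have h2 := cpoly_add_term (q := q) hrec hda
          have h3 : A' + mulOp (a N) * L ^ q = A := by rw [hA']; abel
          rwa [h3] at h2
        · have hn2 : 2 ≤ n := by
            by_contra h2
            have hn1 : n = 1 := by omega
            exact hdvd (hn1 ▸ one_dvd N)
          obtain ⟨c, hcc, hcs⟩ := peel hn2 N A hAN
            (by rw [hAcomm0]; exact AddSubgroup.zero_mem _)
          exfalso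
          have hNJ : N ∈ Jset n N :=
            Finset.mem_filter.mpr ⟨Finset.mem_range.mpr (by omega), hdvd⟩
          have hcN : c N ≠ 0 := by
            intro h0
            have hAm : A ∈ OpLE d (N - 1) := by
              rw [hcs, Finset.sum_range_succ, h0, mulOp_zero, zero_mul, add_zero]
              refine AddSubgroup.sum_mem _ fun j hj => ?_
              exact opLE_mono (by simp only [Finset.mem_range] at hj; omega)
                (mulOp_mul_mem _ (hBb1 j))
            have htop : mulOp (a N) * derOp d ^ N ∈ OpLE d (N - 1) := by
              have e : mulOp (a N) * derOp d ^ N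
                  = A - ∑ i ∈ Finset.range N, mulOp (a i) * derOp d ^ i := by
                rw [ha, Finset.sum_range_succ]; abel
              rw [e]
              refine AddSubgroup.sub_mem _ hAm ?_
              have h2 := mem_of_rep (d := d) (k := N - 1) a
              rwa [show N - 1 + 1 = N by omega] at h2
            exact haN (coef_zero hd ht (show N - 1 < N by omega) htop)
          set cJ : ℕ → F := fun j => if j ∈ Jset n N then c j else 0 with hcJ
          have hJr : ∀ j ∈ Jset n N, j ≤ N ∧ ¬ n ∣ j := by
            intro j hj
            obtain ⟨h1, h2⟩ := Finset.mem_filter.mp hj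
            exact ⟨by have := Finset.mem_range.mp h1; omega, h2⟩
          have hsplit : ∑ j ∈ (Finset.range (N + 1)).filter (fun j => n ∣ j),
                mulOp (c j) * Bb j
              + ∑ j ∈ Jset n N, mulOp (c j) * Bb j
              = ∑ j ∈ Finset.range (N + 1), mulOp (c j) * Bb j :=
            Finset.sum_filter_add_sum_filter_not (Finset.range (N + 1)) (fun j => n ∣ j) _
          set Q := ∑ j ∈ (Finset.range (N + 1)).filter (fun j => n ∣ j),
            mulOp (c j) * Bb j with hQ
          have hQcomm : L * Q = Q * L := by
            rw [hQ, Finset.mul_sum, Finset.sum_mul]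
            refine Finset.sum_congr rfl fun j hj => ?_
            have hdj : n ∣ j := (Finset.mem_filter.mp hj).2
            have hBbj : Bb j = L ^ (j / n) := by rw [hBb]; simp only; rw [if_pos hdj]
            rw [hBbj]
            exact hconstL (c j) (hcc j) (j / n)
          have hThc : theta cJ B (Jset n N) = ∑ j ∈ Jset n N, mulOp (c j) * Bb j := by
            refine Finset.sum_congr rfl fun j hj => ?_
            have hdj : ¬ n ∣ j := (hJr j hj).2
            rw [hcJ]; simp only
            rw [if_pos hj, hBb]; simp only
            rw [if_neg hdj]
          have hThA : theta cJ B (Jset n N) = A - Q := by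
            rw [hThc]
            have h2 : Q + ∑ j ∈ Jset n N, mulOp (c j) * Bb j = A := by
              rw [hQ, hsplit, ← hcs]
            rw [eq_sub_iff_add_eq, add_comm]
            exact h2
          have hThComm : L * theta cJ B (Jset n N) = theta cJ B (Jset n N) * L := by
            rw [hThA, mul_sub_end, sub_mul_end, hAc, hQcomm]
          have hThOp : IsOp d (theta cJ B (Jset n N)) := by
            refine ⟨N, ?_⟩
            refine AddSubgroup.sum_mem _ fun j hj => ?_
            exact opLE_mono (hJr j hj).1 (mulOp_mul_mem _ (hB j).1)
          have hmemV : cJ ∈ VmSet d L B n N := by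
            refine ⟨?_, ?_, hThOp, hThComm⟩
            · intro j
              rw [hcJ]; simp only
              split
              · exact hcc j
              · exact map_zero d
            · intro j hj
              rw [hcJ]; simp only
              rw [if_neg hj]
          have hzero := hV N hN0 hdvd cJ hmemV N
          rw [hcJ] at hzero; simp only at hzero
          rw [if_pos hNJ] at hzero
          exact hcN hzero

/-- If for every positive integer `m` not divisible by `n` the
homogeneous system `hGD_{n,m}(L)` has only the zero constant solution, then the
centralizer of `L` is trivial: `Z(L) = C[L]`. -/
theorem trivial_centralizer_of_trivial_flag {F : Type} [Field F] [CharZero F]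
    (d : F →+ F) (hd : IsDeriv d) (L : AddMonoid.End F) (n : ℕ) (hn : 1 ≤ n)
    (hL : MonicOrd d L n)
    (hnf : L - derOp d ^ n ∈ OpLE d (n - 2))
    (B : ℕ → AddMonoid.End F)
    (hB : ∀ j, B j ∈ OpLE d j ∧ B j - derOp d ^ j ∈ OpLE d (j - 1) ∧
      L * B j - B j * L ∈ OpLE d (n - 2))
    (hV : ∀ m : ℕ, 0 < m → ¬ (n ∣ m) → ∀ c ∈ VmSet d L B n m, ∀ j, c j = 0) :
    Cent d L = CPoly d L := by
  obtain ⟨hord, hmon⟩ := hL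
  obtain ⟨t, ht⟩ := exists_nonconst hd hn hord
  apply Set.Subset.antisymm
  · rintro A ⟨⟨N, hAN⟩, hAc⟩
    exact main_ind hd ht hn hord.1 hnf B hB hV N A hAN hAc
  · rintro P hP
    rw [cpoly_iff] at hP
    obtain ⟨M, aa, haa, rfl⟩ := hP
    constructor
    · refine ⟨n * M, AddSubgroup.sum_mem _ fun i hi => ?_⟩
      refine opLE_mono ?_ (mulOp_mul_mem _ (Lpow_mem hd hord.1 i))
      have hi' : i < M := Finset.mem_range.mp hi
      exact Nat.mul_le_mul_left n (by omega)
    · rw [Finset.mul_sum, Finset.sum_mul]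
      refine Finset.sum_congr rfl fun i _ => ?_
      have h1 : L * mulOp (aa i) = mulOp (aa i) * L := (const_comm hd (haa i) hord.1).symm
      calc L * (mulOp (aa i) * L ^ i) = (L * mulOp (aa i)) * L ^ i := (mul_assoc _ _ _).symm
        _ = (mulOp (aa i) * L) * L ^ i := by rw [h1]
        _ = mulOp (aa i) * (L * L ^ i) := mul_assoc _ _ _
        _ = mulOp (aa i) * (L ^ i * L) := by rw [← pow_succ', pow_succ]
        _ = (mulOp (aa i) * L ^ i) * L := (mul_assoc _ _ _).symm
end FieldPart
end
end
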